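/- arXiv:1203.4419 — 6 statements merged into one kernel-verified Lean document; each statement's English description precedes it below -/
import Mathlib

section
/- For every d ≥ 0 and every n ≥ 1, the number of Ferrers diagrams in ℕ^(d+1) with exactly n elements satisfies p_d(n) = Σ_{r=0}^{n-1} C(d+1, r) · a_{n,r}, where C denotes the binomial coefficient. -/
/-- A Ferrers diagram in `ℕ^k`: a finite nonempty downward-closed subset of `Fin k → ℕ`. -/
def IsFerrers {k : ℕ} (F : Finset (Fin k → ℕ)) : Prop :=
  F.Nonempty ∧ ∀ a ∈ F, ∀ x : Fin k → ℕ, (∀ i, x i ≤ a i) → x ∈ F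

/-- A Ferrers diagram is strict if every coordinate is used by some element. -/
def IsStrict {k : ℕ} (F : Finset (Fin k → ℕ)) : Prop :=
  ∀ i : Fin k, ∃ a ∈ F, a i ≠ 0

/-- `numPart d n` = `p_d(n)`, the number of Ferrers diagrams in `ℕ^(d+1)` with `n` elements. -/
noncomputable def numPart (d n : ℕ) : ℕ :=
  Nat.card {F : Finset (Fin (d + 1) → ℕ) // IsFerrers F ∧ F.card = n}

/-- `Amat n r` = `a_{n,r}`, the number of strict Ferrers diagrams in `ℕ^r` with `n` elements. -/
noncomputable def Amat (n r : ℕ) : ℕ :=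
  Nat.card {F : Finset (Fin r → ℕ) // IsFerrers F ∧ IsStrict F ∧ F.card = n}

/-- `mu r` = `μ_r = {0, e_1, …, e_r} ⊆ ℕ^r`. -/
def mu (r : ℕ) : Finset (Fin r → ℕ) :=
  insert 0 (Finset.univ.image fun i => Pi.single i 1)

/-- The reduced dimension of a Ferrers diagram `F ⊆ ℕ^x` (containing `μ_x`): the number of
coordinates used by some element of `F \ μ_x`. -/
noncomputable def rdim {x : ℕ} (F : Finset (Fin x → ℕ)) : ℕ :=
  Nat.card {i : Fin x // ∃ a ∈ F \ mu x, a i ≠ 0}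

/-- Two coordinates are touched by a common element of the skew diagram `σ`. -/
def Touches {x : ℕ} (σ : Finset (Fin x → ℕ)) (i j : Fin x) : Prop :=
  ∃ a ∈ σ, a i ≠ 0 ∧ a j ≠ 0

/-- `B` is a block of the finest partition of `Fin x` compatible with `σ`,
i.e. an equivalence class of the equivalence relation generated by `Touches σ`. -/
def IsBlock {x : ℕ} (σ : Finset (Fin x → ℕ)) (B : Set (Fin x)) : Prop :=
  ∃ i : Fin x, B = {j | Relation.EqvGen (Touches σ) i j}

/-- The support of `a` is contained in `B`. -/
def SuppIn {x : ℕ} (a : Fin x → ℕ) (B : Set (Fin x)) : Prop :=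
  ∀ i, a i ≠ 0 → i ∈ B

/-- The component of `σ` with block `B` is of type `σ₂`: `B = {i, j}` with `i ≠ j`, and the
elements of `σ` supported in `B` are exactly `{e_i + e_j}`. -/
def IsSigma2 {x : ℕ} (σ : Finset (Fin x → ℕ)) (B : Set (Fin x)) : Prop :=
  ∃ i j : Fin x, i ≠ j ∧ B = {i, j} ∧
    {a ∈ (σ : Set (Fin x → ℕ)) | SuppIn a B} = {Pi.single i 1 + Pi.single j 1}

/-- `Cmat m x` = `c_{m,x}`. -/
noncomputable def Cmat (m x : ℕ) : ℕ :=
  Nat.card {F : Finset (Fin x → ℕ) //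
    IsFerrers F ∧ mu x ⊆ F ∧ F.card = m + x + 1 ∧ rdim F = x}

/-- `Dmat m x` = `d_{m,x}`. -/
noncomputable def Dmat (m x : ℕ) : ℕ :=
  Nat.card {F : Finset (Fin x → ℕ) //
    IsFerrers F ∧ mu x ⊆ F ∧ F.card = m + x + 1 ∧ rdim F = x ∧
      ∀ B : Set (Fin x), IsBlock (F \ mu x) B → ¬ IsSigma2 (F \ mu x) B}

/-- A point of type 1: `e_i + e_j` for some `i ≠ j`. -/
def IsType1 {r : ℕ} (a : Fin r → ℕ) : Prop :=
  ∃ i j : Fin r, i ≠ j ∧ a = Pi.single i 1 + Pi.single j 1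

/-- A point of type 2: `2·e_i` for some `i`. -/
def IsType2 {r : ℕ} (a : Fin r → ℕ) : Prop :=
  ∃ i : Fin r, a = Pi.single i 2

/-- `Fmat n r` = `f_{n,r}`. -/
noncomputable def Fmat (n r : ℕ) : ℕ :=
  Nat.card {F : Finset (Fin r → ℕ) //
    IsFerrers F ∧ mu r ⊆ F ∧ F.card = n ∧
      ∀ B : Set (Fin r), IsBlock (F \ mu r) B →
        ∃ a ∈ F \ mu r, SuppIn a B ∧ ¬ IsType1 a}


section AuxProof

open Finset
open scoped Classical

noncomputable def supp {k : ℕ} (F : Finset (Fin k → ℕ)) : Finset (Fin k) :=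
  Finset.univ.filter fun i => ∃ a ∈ F, a i ≠ 0

lemma mem_supp {k : ℕ} {F : Finset (Fin k → ℕ)} {i : Fin k} :
    i ∈ supp F ↔ ∃ a ∈ F, a i ≠ 0 := by simp [supp]

lemma coord_lt {k : ℕ} {F : Finset (Fin k → ℕ)} (hF : IsFerrers F)
    {a : Fin k → ℕ} (ha : a ∈ F) (i : Fin k) : a i < F.card := by
  classical
  have hsub : (Finset.range (a i + 1)).image (fun t => Function.update a i t) ⊆ F := by
    intro x hx
    simp only [Finset.mem_image, Finset.mem_range] at hx
    obtain ⟨t, ht, rfl⟩ := hx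
    refine hF.2 a ha _ (fun j => ?_)
    rcases eq_or_ne j i with rfl | hj
    · simp only [Function.update_self]; omega
    · simp [Function.update_of_ne hj]
  have hcard : ((Finset.range (a i + 1)).image (fun t => Function.update a i t)).card
      = a i + 1 := by
    rw [Finset.card_image_of_injective _ (Function.update_injective a i), Finset.card_range]
  have := Finset.card_le_card hsub
  omega

lemma ferrers_finite {k n : ℕ} (P : Finset (Fin k → ℕ) → Prop)
    (hP : ∀ F, P F → IsFerrers F ∧ F.card = n) : Finite {F // P F} := by
  classical
  set box : Finset (Fin k → ℕ) := Fintype.piFinset fun _ : Fin k => Finset.range n with hbox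
  refine Finite.of_injective
    (fun F : {F // P F} => (⟨F.1, ?_⟩ : {G // G ∈ box.powerset})) ?_
  · rw [Finset.mem_powerset]
    intro a ha
    obtain ⟨hF, hc⟩ := hP F.1 F.2
    simp only [hbox, Fintype.mem_piFinset, Finset.mem_range]
    intro i
    have := coord_lt hF ha i
    omega
  · intro F G h
    simpa [Subtype.ext_iff] using h

lemma zero_mem_ferrers {k : ℕ} {F : Finset (Fin k → ℕ)} (hF : IsFerrers F) :
    (0 : Fin k → ℕ) ∈ F := by
  obtain ⟨a, ha⟩ := hF.1
  exact hF.2 a ha 0 (fun i => Nat.zero_le _)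

lemma mu_subset_of_strict {r : ℕ} {F : Finset (Fin r → ℕ)} (hF : IsFerrers F)
    (hs : IsStrict F) : mu r ⊆ F := by
  intro x hx
  simp only [mu, Finset.mem_insert, Finset.mem_image, Finset.mem_univ, true_and] at hx
  rcases hx with rfl | ⟨i, rfl⟩
  · exact zero_mem_ferrers hF
  · obtain ⟨a, ha, hai⟩ := hs i
    refine hF.2 a ha _ (fun j => ?_)
    rcases eq_or_ne j i with rfl | hj
    · rw [Pi.single_eq_same]; omega
    · rw [Pi.single_eq_of_ne hj]; exact Nat.zero_le _

lemma card_mu (r : ℕ) : (mu r).card = r + 1 := by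
  classical
  rw [mu, Finset.card_insert_of_notMem, Finset.card_image_of_injective, Finset.card_univ,
    Fintype.card_fin]
  · intro i j hij
    by_contra h
    rw [funext_iff] at hij
    have h2 := hij i
    simp [Pi.single_apply, h] at h2
  · intro h0
    simp only [Finset.mem_image, Finset.mem_univ, true_and] at h0
    obtain ⟨i, hi⟩ := h0
    have := congrFun hi i
    rw [Pi.single_eq_same] at this
    exact one_ne_zero this

lemma Amat_eq_zero {n r : ℕ} (h : n ≤ r) : Amat n r = 0 := by
  have : IsEmpty {F : Finset (Fin r → ℕ) // IsFerrers F ∧ IsStrict F ∧ F.card = n} := by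
    constructor
    rintro ⟨F, hF, hs, hc⟩
    have h1 := Finset.card_le_card (mu_subset_of_strict hF hs)
    rw [card_mu, hc] at h1
    omega
  rw [Amat, Nat.card_of_isEmpty]

noncomputable def res {k : ℕ} (S : Finset (Fin k)) (a : Fin k → ℕ) : Fin S.card → ℕ :=
  fun t => a (S.orderIsoOfFin rfl t)

noncomputable def ext' {k : ℕ} (S : Finset (Fin k)) (b : Fin S.card → ℕ) : Fin k → ℕ :=
  fun i => if h : i ∈ S then b ((S.orderIsoOfFin rfl).symm ⟨i, h⟩) else 0

lemma res_ext' {k : ℕ} (S : Finset (Fin k)) (b : Fin S.card → ℕ) : res S (ext' S b) = b := by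
  funext t
  have h : ((S.orderIsoOfFin rfl) t : Fin k) ∈ S := (S.orderIsoOfFin rfl t).2
  simp only [res, ext', dif_pos h]
  have h2 : (⟨((S.orderIsoOfFin rfl) t : Fin k), h⟩ : {x // x ∈ S}) = S.orderIsoOfFin rfl t :=
    rfl
  rw [h2, OrderIso.symm_apply_apply]

lemma ext'_res {k : ℕ} (S : Finset (Fin k)) (a : Fin k → ℕ) (ha : ∀ i, a i ≠ 0 → i ∈ S) :
    ext' S (res S a) = a := by
  funext i
  by_cases h : i ∈ S
  · simp only [ext', dif_pos h, res]
    rw [OrderIso.apply_symm_apply]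
  · simp only [ext', dif_neg h]
    by_contra hne
    exact h (ha i (fun h0 => hne h0.symm))

lemma ext'_apply_mem {k : ℕ} (S : Finset (Fin k)) (b : Fin S.card → ℕ) {i : Fin k}
    (h : i ∈ S) : ext' S b i = b ((S.orderIsoOfFin rfl).symm ⟨i, h⟩) := dif_pos h

lemma ext'_apply_notMem {k : ℕ} (S : Finset (Fin k)) (b : Fin S.card → ℕ) {i : Fin k}
    (h : i ∉ S) : ext' S b i = 0 := dif_neg h

lemma res_apply {k : ℕ} (S : Finset (Fin k)) (a : Fin k → ℕ) (t : Fin S.card) :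
    res S a t = a (S.orderIsoOfFin rfl t) := rfl

noncomputable def fdEquiv {k : ℕ} (n : ℕ) (S : Finset (Fin k)) :
    {F : Finset (Fin k → ℕ) // (IsFerrers F ∧ F.card = n) ∧ supp F = S} ≃
    {G : Finset (Fin S.card → ℕ) // IsFerrers G ∧ IsStrict G ∧ G.card = n} where
  toFun F := ⟨F.1.image (res S), by
    obtain ⟨F, ⟨hF, hc⟩, hsupp⟩ := F
    have hmemS : ∀ a ∈ F, ∀ i, a i ≠ 0 → i ∈ S := by
      intro a ha i hi
      rw [← hsupp, mem_supp]; exact ⟨a, ha, hi⟩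
    refine ⟨⟨hF.1.image _, ?_⟩, ?_, ?_⟩
    · -- downward closed
      intro b hb y hy
      simp only [Finset.mem_image] at hb ⊢
      obtain ⟨a, ha, rfl⟩ := hb
      have hx : ext' S y ∈ F := by
        refine hF.2 a ha _ (fun i => ?_)
        by_cases h : i ∈ S
        · rw [ext'_apply_mem S y h]
          calc y ((S.orderIsoOfFin rfl).symm ⟨i, h⟩)
              ≤ res S a ((S.orderIsoOfFin rfl).symm ⟨i, h⟩) := hy _
            _ = a i := by rw [res_apply, OrderIso.apply_symm_apply]
        · rw [ext'_apply_notMem S y h]; exact Nat.zero_le _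
      exact ⟨ext' S y, hx, res_ext' S y⟩
    · -- strict
      intro t
      have hmem : ((S.orderIsoOfFin rfl) t : Fin k) ∈ supp F := by
        rw [hsupp]; exact (S.orderIsoOfFin rfl t).2
      rw [mem_supp] at hmem
      obtain ⟨a, ha, hne⟩ := hmem
      exact ⟨res S a, Finset.mem_image_of_mem _ ha, hne⟩
    · -- card
      rw [Finset.card_image_of_injOn, hc]
      intro a ha a' ha' hres
      have := ext'_res S a (hmemS a ha)
      rw [← this, hres, ext'_res S a' (hmemS a' ha')]⟩
  invFun G := ⟨G.1.image (ext' S), by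
    obtain ⟨G, hG, hstr, hc⟩ := G
    have hFerr : IsFerrers (G.image (ext' S)) := by
      refine ⟨hG.1.image _, ?_⟩
      intro a ha x hx
      simp only [Finset.mem_image] at ha ⊢
      obtain ⟨b, hb, rfl⟩ := ha
      have hxS : ∀ i, x i ≠ 0 → i ∈ S := by
        intro i hi
        by_contra h
        exact hi (Nat.le_zero.mp ((hx i).trans_eq (ext'_apply_notMem S b h)))
      have hresx : res S x ∈ G := by
        refine hG.2 b hb _ (fun t => ?_)
        calc res S x t = x (S.orderIsoOfFin rfl t) := rfl
          _ ≤ ext' S b (S.orderIsoOfFin rfl t) := hx _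
          _ = res S (ext' S b) t := rfl
          _ = b t := by rw [res_ext']
      exact ⟨res S x, hresx, ext'_res S x hxS⟩
    refine ⟨⟨hFerr, ?_⟩, ?_⟩
    · rw [Finset.card_image_of_injOn, hc]
      intro b _ b' _ h
      rw [← res_ext' S b, h, res_ext' S b']
    · -- supp = S
      ext i
      rw [mem_supp]
      constructor
      · rintro ⟨a, ha, hne⟩
        simp only [Finset.mem_image] at ha
        obtain ⟨b, hb, rfl⟩ := ha
        by_contra h
        exact hne (ext'_apply_notMem S b h)
      · intro hi
        obtain ⟨b, hb, hne⟩ := hstr ((S.orderIsoOfFin rfl).symm ⟨i, hi⟩)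
        refine ⟨ext' S b, Finset.mem_image_of_mem _ hb, ?_⟩
        rw [ext'_apply_mem S b hi]
        exact hne⟩
  left_inv F := by
    obtain ⟨F, ⟨hF, hc⟩, hsupp⟩ := F
    apply Subtype.ext
    show (F.image (res S)).image (ext' S) = F
    rw [Finset.image_image]
    have : ∀ a ∈ F, (ext' S ∘ res S) a = id a := by
      intro a ha
      apply ext'_res
      intro i hi
      rw [← hsupp, mem_supp]; exact ⟨a, ha, hi⟩
    rw [Finset.image_congr this, Finset.image_id]
  right_inv G := by
    apply Subtype.ext
    show (G.1.image (ext' S)).image (res S) = G.1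
    rw [Finset.image_image]
    have : ∀ b ∈ G.1, (res S ∘ ext' S) b = id b := fun b _ => res_ext' S b
    rw [Finset.image_congr this, Finset.image_id]

lemma numPart_sum (d n : ℕ) :
    numPart d n = ∑ S : Finset (Fin (d + 1)), Amat n S.card := by
  classical
  haveI h1 : Finite {F : Finset (Fin (d + 1) → ℕ) // IsFerrers F ∧ F.card = n} :=
    ferrers_finite _ (fun F h => h)
  haveI h2 : ∀ S : Finset (Fin (d + 1)),
      Finite {F : Finset (Fin (d + 1) → ℕ) // (IsFerrers F ∧ F.card = n) ∧ supp F = S} :=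
    fun S => ferrers_finite _ (fun F h => h.1)
  letI : Fintype {F : Finset (Fin (d + 1) → ℕ) // IsFerrers F ∧ F.card = n} :=
    Fintype.ofFinite _
  letI : ∀ S : Finset (Fin (d + 1)),
      Fintype {F : Finset (Fin (d + 1) → ℕ) // (IsFerrers F ∧ F.card = n) ∧ supp F = S} :=
    fun S => Fintype.ofFinite _
  have e1 : {F : Finset (Fin (d + 1) → ℕ) // IsFerrers F ∧ F.card = n} ≃
      Σ S : Finset (Fin (d + 1)),
        {F : Finset (Fin (d + 1) → ℕ) // (IsFerrers F ∧ F.card = n) ∧ supp F = S} :=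
    (Equiv.sigmaFiberEquiv
      (fun F : {F : Finset (Fin (d + 1) → ℕ) // IsFerrers F ∧ F.card = n} => supp F.1)).symm.trans
      (Equiv.sigmaCongrRight fun S =>
        { toFun := fun x => ⟨x.1.1, x.1.2, x.2⟩
          invFun := fun y => ⟨⟨y.1, y.2.1⟩, y.2.2⟩
          left_inv := fun x => rfl
          right_inv := fun y => rfl })
  rw [numPart, Nat.card_eq_fintype_card, Fintype.card_congr e1, Fintype.card_sigma]
  refine Finset.sum_congr rfl fun S _ => ?_
  rw [← Nat.card_eq_fintype_card, Nat.card_congr (fdEquiv n S), Amat]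

end AuxProof

/-- `p_d(n) = Σ_{r=0}^{n-1} C(d+1, r) · a_{n,r}` for all `d ≥ 0`, `n ≥ 1`. -/
theorem statement0 (d n : ℕ) (hn : 1 ≤ n) :
    numPart d n = ∑ r ∈ Finset.range n, Nat.choose (d + 1) r * Amat n r := by
  rw [numPart_sum]
  have h1 : ∑ S : Finset (Fin (d + 1)), Amat n S.card
      = ∑ r ∈ Finset.range (d + 2), Nat.choose (d + 1) r * Amat n r := by
    classical
    have hmap : ∀ S ∈ (Finset.univ : Finset (Finset (Fin (d + 1)))),
        S.card ∈ Finset.range (d + 2) := by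
      intro S _
      rw [Finset.mem_range]
      have := Finset.card_le_univ S
      rw [Fintype.card_fin] at this
      omega
    rw [← Finset.sum_fiberwise_of_maps_to hmap (fun S => Amat n S.card)]
    refine Finset.sum_congr rfl fun r hr => ?_
    have hfil : Finset.univ.filter (fun S : Finset (Fin (d + 1)) => S.card = r)
        = Finset.powersetCard r Finset.univ := by
      rw [Finset.powersetCard_eq_filter, Finset.powerset_univ]
    rw [hfil,
      Finset.sum_congr rfl (fun S hS => by rw [(Finset.mem_powersetCard.mp hS).2]),
      Finset.sum_const, Finset.card_powersetCard, Finset.card_univ, Fintype.card_fin,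
      smul_eq_mul]
  rw [h1]
  set N := n + d + 2 with hN
  have hsub1 : Finset.range (d + 2) ⊆ Finset.range N := by
    apply Finset.range_subset_range.mpr; omega
  have hsub2 : Finset.range n ⊆ Finset.range N := by
    apply Finset.range_subset_range.mpr; omega
  rw [Finset.sum_subset hsub1, Finset.sum_subset hsub2]
  · intro r _ hr
    rw [Finset.mem_range, not_lt] at hr
    rw [Amat_eq_zero hr, mul_zero]
  · intro r _ hr
    rw [Finset.mem_range, not_lt] at hr
    rw [Nat.choose_eq_zero_of_lt (by omega), zero_mul]
end

section
/- For all m ≥ 0 and x > 2m, c_{m,x} = 0; that is, there is no Ferrers diagram λ ⊆ ℕ^x with m + x + 1 elements containing μ_x and having reduced dimension x when x > 2m. -/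
/-- `c_{m,x} = 0` whenever `x > 2m`. -/
theorem statement5 (m x : ℕ) (h : 2 * m < x) : Cmat m x = 0 := by
  classical
  rw [Cmat, Nat.card_eq_zero]
  left
  refine ⟨?_⟩
  rintro ⟨F, hFer, hmuF, hcard, hrdim⟩
  -- card of mu x
  have hmu_card : (mu x).card = x + 1 := by
    rw [mu, Finset.card_insert_of_notMem, Finset.card_image_of_injective]
    · simp
    · intro i j hij
      by_contra hne
      have := congrFun hij i
      simp only [Pi.single_eq_same, Pi.single_eq_of_ne hne] at this
      exact one_ne_zero this
    · simp only [Finset.mem_image]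
      rintro ⟨i, -, hi⟩
      have := congrFun hi i
      simp at this
  -- card of skew part
  have hσcard : (F \ mu x).card = m := by
    rw [Finset.card_sdiff_of_subset hmuF, hcard, hmu_card]
    omega
  -- every coordinate is touched by some element of F \ mu x
  have hall : ∀ i : Fin x, ∃ a ∈ F \ mu x, a i ≠ 0 := by
    by_contra hc
    push_neg at hc
    obtain ⟨i0, hi0⟩ := hc
    have hlt : Nat.card {i : Fin x // ∃ a ∈ F \ mu x, a i ≠ 0} <
        Nat.card (Fin x) := by
      refine Finite.card_subtype_lt (x := i0) ?_
      push_neg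
      exact hi0
    rw [rdim] at hrdim
    rw [hrdim, Nat.card_eq_fintype_card, Fintype.card_fin] at hlt
    exact lt_irrefl x hlt
  -- for each coordinate, find a small witness
  have key : ∀ i : Fin x, ∃ b ∈ F \ mu x, b i ≠ 0 ∧
      ∃ k l : Fin x, ∀ j, b j ≠ 0 → j = k ∨ j = l := by
    intro i
    obtain ⟨a, haσ, hai⟩ := hall i
    obtain ⟨haF, hamu⟩ := Finset.mem_sdiff.mp haσ
    rcases Nat.lt_or_ge (a i) 2 with h1 | h2
    · -- a i = 1, find another nonzero coordinate
      have hai1 : a i = 1 := by omega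
      have hj : ∃ j, j ≠ i ∧ a j ≠ 0 := by
        by_contra hc
        push_neg at hc
        apply hamu
        have ha : a = Pi.single i 1 := by
          funext j
          by_cases hji : j = i
          · subst hji; simp [hai1]
          · simp [Pi.single_eq_of_ne hji, hc j hji]
        rw [ha, mu]
        exact Finset.mem_insert_of_mem (Finset.mem_image.mpr ⟨i, Finset.mem_univ i, rfl⟩)
      obtain ⟨j, hji, haj⟩ := hj
      set b : Fin x → ℕ := Pi.single i 1 + Pi.single j 1 with hb
      have hbi : b i = 1 := by
        simp [hb, Pi.single_eq_same, Pi.single_eq_of_ne (Ne.symm hji)]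
      have hbj : b j = 1 := by
        simp [hb, Pi.single_eq_same, Pi.single_eq_of_ne hji]
      have hbF : b ∈ F := by
        refine hFer.2 a haF b ?_
        intro k
        by_cases hki : k = i
        · subst hki; rw [hbi]; omega
        · by_cases hkj : k = j
          · subst hkj; rw [hbj]; omega
          · simp [hb, Pi.single_eq_of_ne hki, Pi.single_eq_of_ne hkj]
      have hbsupp : ∀ k, b k ≠ 0 → k = i ∨ k = j := by
        intro k hk
        by_contra hc
        push_neg at hc
        apply hk
        simp [hb, Pi.single_eq_of_ne hc.1, Pi.single_eq_of_ne hc.2]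
      have hbmu : b ∉ mu x := by
        rw [mu]
        simp only [Finset.mem_insert, Finset.mem_image]
        rintro (h0 | ⟨k, -, hk⟩)
        · have h0' : b i = 0 := by rw [h0]; rfl
          omega
        · have hbk : b = Pi.single k 1 := hk.symm
          have h1 : (Pi.single k 1 : Fin x → ℕ) i = 1 := by rw [← hbk]; exact hbi
          have h2 : (Pi.single k 1 : Fin x → ℕ) j = 1 := by rw [← hbk]; exact hbj
          have hik : i = k := by
            by_contra hne
            rw [Pi.single_eq_of_ne hne] at h1
            omega
          have hjk : j = k := by
            by_contra hne
            rw [Pi.single_eq_of_ne hne] at h2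
            omega
          exact hji (hjk.trans hik.symm)
      exact ⟨b, Finset.mem_sdiff.mpr ⟨hbF, hbmu⟩, by rw [hbi]; simp, i, j, hbsupp⟩
    · -- a i ≥ 2
      set b : Fin x → ℕ := Pi.single i 2 with hb
      have hbi : b i = 2 := by simp [hb]
      have hbF : b ∈ F := by
        refine hFer.2 a haF b ?_
        intro k
        by_cases hki : k = i
        · subst hki; rw [hbi]; omega
        · simp [hb, Pi.single_eq_of_ne hki]
      have hbsupp : ∀ k, b k ≠ 0 → k = i ∨ k = i := by
        intro k hk
        by_contra hc
        push_neg at hc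
        exact hk (by simp [hb, Pi.single_eq_of_ne hc.1])
      have hbmu : b ∉ mu x := by
        rw [mu]
        simp only [Finset.mem_insert, Finset.mem_image]
        rintro (h0 | ⟨k, -, hk⟩)
        · have h0' : b i = 0 := by rw [h0]; rfl
          omega
        · have hbk : b = Pi.single k 1 := hk.symm
          have this : (Pi.single k 1 : Fin x → ℕ) i = 2 := by rw [← hbk]; exact hbi
          by_cases hik : i = k
          · subst hik; simp at this
          · rw [Pi.single_eq_of_ne hik] at this
            exact absurd this (by omega)
      exact ⟨b, Finset.mem_sdiff.mpr ⟨hbF, hbmu⟩, by rw [hbi]; simp, i, i, hbsupp⟩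
  choose b hbσ hbi k l hsupp using key
  -- the image of b lies in F \ mu x
  have himg : Finset.univ.image b ⊆ F \ mu x := by
    intro c hc
    obtain ⟨i, -, rfl⟩ := Finset.mem_image.mp hc
    exact hbσ i
  -- counting: fibers of b have size at most 2
  have hfib : ∀ c ∈ Finset.univ.image b,
      (Finset.univ.filter fun i => b i = c).card ≤ 2 := by
    intro c hc
    obtain ⟨i0, -, rfl⟩ := Finset.mem_image.mp hc
    have hsub : (Finset.univ.filter fun i => b i = b i0) ⊆ {k i0, l i0} := by
      intro i hi
      have hbe : b i = b i0 := (Finset.mem_filter.mp hi).2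
      have : b i0 i ≠ 0 := by rw [← hbe]; exact hbi i
      have := hsupp i0 i this
      simp only [Finset.mem_insert, Finset.mem_singleton]
      exact this
    calc (Finset.univ.filter fun i => b i = b i0).card
        ≤ ({k i0, l i0} : Finset (Fin x)).card := Finset.card_le_card hsub
      _ ≤ 2 := Finset.card_insert_le _ _ |>.trans (by simp)
  have hmain : (Finset.univ : Finset (Fin x)).card ≤
      2 * (Finset.univ.image b).card :=
    Finset.card_le_mul_card_image _ _ hfib
  have h1 : (Finset.univ.image b).card ≤ m := by
    rw [← hσcard]
    exact Finset.card_le_card himg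
  rw [Finset.card_univ, Fintype.card_fin] at hmain
  omega
end

section
/- For every m ≥ 1, c_{m,2m} = (2m − 1)!! = (2m)! / (2^m · m!); that is, the number of Ferrers diagrams λ ⊆ ℕ^(2m) with 3m + 1 elements containing μ_{2m} and having reduced dimension 2m equals (2m)! / (2^m · m!). -/
open Finset Nat

namespace S6aux

variable {r : ℕ}

def deg {r : ℕ} (a : Fin r → ℕ) : ℕ := ∑ i, a i

lemma deg_mono {a b : Fin r → ℕ} (h : ∀ i, a i ≤ b i) : deg a ≤ deg b :=
  Finset.sum_le_sum fun i _ => h i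

lemma deg_single (i : Fin r) (n : ℕ) : deg (Pi.single i n) = n :=
  Fintype.sum_pi_single' i n

lemma deg_add (a b : Fin r → ℕ) : deg (a + b) = deg a + deg b := by
  simp [deg, Finset.sum_add_distrib]

lemma sum_eq_one {ι : Type*} [DecidableEq ι] {s : Finset ι} {f : ι → ℕ}
    (h : ∑ i ∈ s, f i = 1) :
    ∃ i ∈ s, f i = 1 ∧ ∀ j ∈ s, j ≠ i → f j = 0 := by
  have hex : ∃ i ∈ s, f i ≠ 0 := by
    by_contra hc
    push_neg at hc
    rw [Finset.sum_eq_zero hc] at h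
    omega
  obtain ⟨i, his, hi⟩ := hex
  have h1 : f i ≤ 1 := h ▸ Finset.single_le_sum (fun j _ => Nat.zero_le _) his
  refine ⟨i, his, by omega, fun j hjs hji => ?_⟩
  have : f i + f j ≤ ∑ k ∈ s, f k := by
    rw [← Finset.add_sum_erase s f his]
    exact Nat.add_le_add_left (Finset.single_le_sum (fun k _ => Nat.zero_le _)
      (Finset.mem_erase.2 ⟨hji, hjs⟩)) _
  omega

lemma sum_eq_two {ι : Type*} [DecidableEq ι] {s : Finset ι} {f : ι → ℕ}
    (h : ∑ i ∈ s, f i = 2) :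
    (∃ i ∈ s, f i = 2 ∧ ∀ j ∈ s, j ≠ i → f j = 0) ∨
    (∃ i ∈ s, ∃ j ∈ s, i ≠ j ∧ f i = 1 ∧ f j = 1 ∧
      ∀ k ∈ s, k ≠ i → k ≠ j → f k = 0) := by
  have hex : ∃ i ∈ s, f i ≠ 0 := by
    by_contra hc
    push_neg at hc
    rw [Finset.sum_eq_zero hc] at h
    omega
  obtain ⟨i, his, hi⟩ := hex
  have h2 : f i ≤ 2 := h ▸ Finset.single_le_sum (fun j _ => Nat.zero_le _) his
  have hsplit : f i + ∑ j ∈ s.erase i, f j = 2 := by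
    rw [Finset.add_sum_erase s f his]; exact h
  rcases Nat.lt_or_ge (f i) 2 with h1 | h1
  · have hfi : f i = 1 := by omega
    have hrest : ∑ j ∈ s.erase i, f j = 1 := by omega
    obtain ⟨j, hjs, hj1, hj0⟩ := sum_eq_one hrest
    rw [Finset.mem_erase] at hjs
    refine .inr ⟨i, his, j, hjs.2, fun hij => hjs.1 hij.symm, hfi, hj1, fun k hks hki hkj => ?_⟩
    exact hj0 k (Finset.mem_erase.2 ⟨hki, hks⟩) hkj
  · have hfi : f i = 2 := by omega
    have hrest : ∑ j ∈ s.erase i, f j = 0 := by omega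
    rw [Finset.sum_eq_zero_iff] at hrest
    exact .inl ⟨i, his, hfi, fun j hjs hji => hrest j (Finset.mem_erase.2 ⟨hji, hjs⟩)⟩

lemma deg_eq_one {a : Fin r → ℕ} (h : deg a = 1) : ∃ i, a = Pi.single i 1 := by
  obtain ⟨i, _, hi1, hi0⟩ := sum_eq_one (s := Finset.univ) (f := a) h
  refine ⟨i, funext fun k => ?_⟩
  rcases eq_or_ne k i with rfl | hk
  · simp [hi1]
  · simp [Pi.single_apply, hk, hi0 k (Finset.mem_univ k) hk]

def pair {r : ℕ} (i j : Fin r) : Fin r → ℕ := Pi.single i 1 + Pi.single j 1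

lemma pair_comm (i j : Fin r) : pair i j = pair j i := add_comm _ _

lemma pair_apply (i j k : Fin r) :
    pair i j k = (if k = i then 1 else 0) + (if k = j then 1 else 0) := by
  simp [pair, Pi.single_apply, eq_comm]

lemma deg_pair (i j : Fin r) : deg (pair i j) = 2 := by
  rw [pair, deg_add, deg_single, deg_single]

lemma pair_ne_zero {i j k : Fin r} : pair i j k ≠ 0 ↔ k = i ∨ k = j := by
  rw [pair_apply]
  by_cases h1 : k = i <;> by_cases h2 : k = j <;> simp [h1, h2]

lemma mem_mu {a : Fin r → ℕ} : a ∈ mu r ↔ a = 0 ∨ ∃ i, a = Pi.single i 1 := by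
  simp [mu, eq_comm]

lemma mem_mu_iff_deg {a : Fin r → ℕ} : a ∈ mu r ↔ deg a ≤ 1 := by
  constructor
  · rw [mem_mu]
    rintro (rfl | ⟨i, rfl⟩)
    · simp [deg]
    · simp [deg_single]
  · intro h
    rw [mem_mu]
    interval_cases hd : deg a
    · left
      simpa [deg, Finset.sum_eq_zero_iff, funext_iff] using hd
    · exact .inr (deg_eq_one hd)

lemma single_one_injective : Function.Injective (fun i : Fin r => Pi.single i (1 : ℕ)) := by
  intro i j hij
  by_contra hne
  have := congrFun hij i
  simp [Pi.single_apply, hne] at this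

lemma card_mu (r : ℕ) : (mu r).card = r + 1 := by
  have hnm : (0 : Fin r → ℕ) ∉ Finset.univ.image fun i => Pi.single i (1 : ℕ) := by
    simp only [Finset.mem_image]
    rintro ⟨i, -, hi⟩
    have := congrFun hi i
    simp at this
  rw [mu, Finset.card_insert_of_notMem hnm,
    Finset.card_image_of_injective _ single_one_injective, Finset.card_univ, Fintype.card_fin]

lemma pair_notMem_mu {i j : Fin r} : pair i j ∉ mu r := by
  rw [mem_mu_iff_deg, deg_pair]; omega

lemma pair_eq_iff {i j k l : Fin r} (hij : i ≠ j) (hkl : k ≠ l) :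
    pair i j = pair k l ↔ (i = k ∧ j = l) ∨ (i = l ∧ j = k) := by
  constructor
  · intro h
    have hik : i = k ∨ i = l :=
      pair_ne_zero.mp (by rw [← h]; exact pair_ne_zero.mpr (Or.inl rfl))
    rcases hik with rfl | rfl
    · have hjl : j = i ∨ j = l :=
        pair_ne_zero.mp (by rw [← h]; exact pair_ne_zero.mpr (Or.inr rfl))
      rcases hjl with rfl | rfl
      · exact absurd rfl hij
      · exact Or.inl ⟨rfl, rfl⟩
    · have hjk : j = k ∨ j = i :=
        pair_ne_zero.mp (by rw [← h]; exact pair_ne_zero.mpr (Or.inr rfl))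
      rcases hjk with rfl | rfl
      · exact Or.inr ⟨rfl, rfl⟩
      · exact absurd rfl hij
  · rintro (⟨rfl, rfl⟩ | ⟨rfl, rfl⟩)
    · rfl
    · exact pair_comm i j

lemma supp_card_le_deg (a : Fin r → ℕ) :
    (Finset.univ.filter fun i => a i ≠ 0).card ≤ deg a := by
  classical
  have h1 : (Finset.univ.filter fun i => a i ≠ 0).card
      ≤ ∑ i ∈ Finset.univ.filter (fun i => a i ≠ 0), a i := by
    rw [Finset.card_eq_sum_ones]
    exact Finset.sum_le_sum fun i hi =>
      Nat.one_le_iff_ne_zero.2 (Finset.mem_filter.1 hi).2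
  exact h1.trans (Finset.sum_le_sum_of_subset (Finset.filter_subset _ _))


lemma structure_thm {m : ℕ} (F : Finset (Fin (2 * m) → ℕ))
    (hF : IsFerrers F) (hmu : mu (2 * m) ⊆ F) (hcard : F.card = m + 2 * m + 1)
    (hrdim : rdim F = 2 * m) :
    ∃ f : Fin (2 * m) → Fin (2 * m), Function.Involutive f ∧ (∀ i, f i ≠ i) ∧
      F = mu (2 * m) ∪ Finset.image (fun i => pair i (f i)) Finset.univ := by
  classical
  set σ := F \ mu (2 * m) with hσ
  have hσcard : σ.card = m := by
    rw [hσ, Finset.card_sdiff_of_subset hmu, hcard, card_mu]; omega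
  -- every coordinate is touched by σ
  have htouch : ∀ i : Fin (2 * m), ∃ a ∈ σ, a i ≠ 0 := by
    have h1 : (Finset.univ.filter fun i : Fin (2 * m) => ∃ a ∈ F \ mu (2 * m), a i ≠ 0)
        = Finset.univ := by
      apply Finset.eq_univ_of_card
      have h2 := hrdim
      rw [rdim, Nat.card_eq_fintype_card, Fintype.card_subtype] at h2
      rw [h2, Fintype.card_fin]
    intro i
    have h3 : i ∈ Finset.univ.filter fun i : Fin (2 * m) => ∃ a ∈ F \ mu (2 * m), a i ≠ 0 := by
      rw [h1]; exact Finset.mem_univ i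
    exact (Finset.mem_filter.1 h3).2
  have hdegσ : ∀ a ∈ σ, 2 ≤ deg a := by
    intro a ha
    have h1 := (Finset.mem_sdiff.1 ha).2
    rw [mem_mu_iff_deg] at h1; omega
  -- every coordinate is touched by a degree-2 element of σ
  have hc2 : ∀ i : Fin (2 * m), ∃ c ∈ σ, c i ≠ 0 ∧ deg c = 2 := by
    intro i
    obtain ⟨a, haσ, hai⟩ := htouch i
    have haF : a ∈ F := (Finset.mem_sdiff.1 haσ).1
    by_cases hj : ∃ j, j ≠ i ∧ a j ≠ 0
    · obtain ⟨j, hji, haj⟩ := hj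
      refine ⟨pair i j, ?_, ?_, deg_pair i j⟩
      · rw [hσ, Finset.mem_sdiff]
        refine ⟨hF.2 a haF _ (fun k => ?_), ?_⟩
        · rw [pair_apply]
          by_cases h1 : k = i
          · subst h1
            rw [if_pos rfl, if_neg (fun h => hji h.symm)]
            have := Nat.one_le_iff_ne_zero.2 hai
            omega
          · by_cases h2 : k = j
            · subst h2
              rw [if_neg h1, if_pos rfl]
              have := Nat.one_le_iff_ne_zero.2 haj
              omega
            · rw [if_neg h1, if_neg h2]
              omega
        · rw [mem_mu_iff_deg, deg_pair]; omega
      · exact pair_ne_zero.2 (Or.inl rfl)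
    · push_neg at hj
      have hdga : deg a = a i := by
        rw [deg, ← Finset.add_sum_erase _ _ (Finset.mem_univ i),
          Finset.sum_eq_zero (fun j hjm => hj j (Finset.mem_erase.1 hjm).1), add_zero]
      have hai2 : 2 ≤ a i := by
        have := hdegσ a haσ
        omega
      refine ⟨Pi.single i 2, ?_, by simp, deg_single i 2⟩
      rw [hσ, Finset.mem_sdiff]
      refine ⟨hF.2 a haF _ (fun k => ?_), ?_⟩
      · rcases eq_or_ne k i with rfl | hk
        · simpa using hai2
        · simp [Pi.single_apply, hk]
      · rw [mem_mu_iff_deg, deg_single]; omega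
  choose c hcσ hci hcdeg using hc2
  set I := Finset.univ.image c with hI
  have hIσ : I ⊆ σ := by
    rw [hI]
    intro b hb
    obtain ⟨i, -, rfl⟩ := Finset.mem_image.1 hb
    exact hcσ i
  have hdegI : ∀ b ∈ I, deg b = 2 := by
    intro b hb
    obtain ⟨i, -, rfl⟩ := Finset.mem_image.1 hb
    exact hcdeg i
  have hkey : (Finset.univ : Finset (Fin (2 * m))).card
      = ∑ b ∈ I, (Finset.univ.filter fun i => c i = b).card :=
    Finset.card_eq_sum_card_image c Finset.univ
  have hfibsub : ∀ b ∈ I, (Finset.univ.filter fun i => c i = b)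
      ⊆ (Finset.univ.filter fun i => b i ≠ 0) := by
    intro b _ j hj
    rw [Finset.mem_filter] at hj ⊢
    exact ⟨hj.1, hj.2 ▸ hci j⟩
  have hfib_le : ∀ b ∈ I, (Finset.univ.filter fun i => c i = b).card ≤ 2 := by
    intro b hb
    refine (Finset.card_le_card (hfibsub b hb)).trans ?_
    exact (supp_card_le_deg _).trans_eq (hdegI b hb)
  have hcardsum : ∑ b ∈ I, (Finset.univ.filter fun i => c i = b).card = 2 * m := by
    rw [← hkey, Finset.card_univ, Fintype.card_fin]
  have hIcard : I.card = m := by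
    have h1 : I.card ≤ m := le_trans (Finset.card_le_card hIσ) (le_of_eq hσcard)
    have h2 : 2 * m ≤ 2 * I.card := by
      calc 2 * m = ∑ b ∈ I, (Finset.univ.filter fun i => c i = b).card := hcardsum.symm
        _ ≤ ∑ _b ∈ I, 2 := Finset.sum_le_sum hfib_le
        _ = 2 * I.card := by rw [Finset.sum_const, smul_eq_mul, mul_comm]
    omega
  have hIeq : I = σ := Finset.eq_of_subset_of_card_le hIσ (le_trans (le_of_eq hσcard) (le_of_eq hIcard.symm))
  have hfib_eq : ∀ b ∈ I, (Finset.univ.filter fun i => c i = b).card = 2 := by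
    have hsum2 : ∑ b ∈ I, (Finset.univ.filter fun i => c i = b).card = ∑ _b ∈ I, 2 := by
      rw [hcardsum, Finset.sum_const, smul_eq_mul, hIcard, mul_comm]
    exact (Finset.sum_eq_sum_iff_of_le hfib_le).1 hsum2
  have hsupp_eq : ∀ b ∈ I, (Finset.univ.filter fun i => b i ≠ 0)
      = (Finset.univ.filter fun i => c i = b) := by
    intro b hb
    refine (Finset.eq_of_subset_of_card_le (hfibsub b hb) ?_).symm
    rw [hfib_eq b hb]
    exact (supp_card_le_deg _).trans_eq (hdegI b hb)
  have huniq : ∀ b ∈ σ, ∀ i, b i ≠ 0 → c i = b := by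
    intro b hb i hbi
    rw [← hIeq] at hb
    have h1 : i ∈ Finset.univ.filter fun j => c j = b := by
      rw [← hsupp_eq b hb]
      exact Finset.mem_filter.2 ⟨Finset.mem_univ i, hbi⟩
    exact (Finset.mem_filter.1 h1).2
  have hpair : ∀ b ∈ σ, ∃ i j, i ≠ j ∧ b = pair i j := by
    intro b hb
    rw [← hIeq] at hb
    have hdb : ∑ i, b i = 2 := hdegI b hb
    rcases sum_eq_two hdb with ⟨i, -, hi2, hi0⟩ | ⟨i, -, j, -, hij, hi1, hj1, h0⟩
    · exfalso
      have hsupp : (Finset.univ.filter fun k => b k ≠ 0) = {i} := by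
        ext k
        simp only [Finset.mem_filter, Finset.mem_univ, true_and, Finset.mem_singleton]
        constructor
        · intro hk
          by_contra hki
          exact hk (hi0 k (Finset.mem_univ k) hki)
        · rintro rfl
          simp [hi2]
      have h2 := hfib_eq b hb
      rw [← hsupp_eq b hb, hsupp] at h2
      simp at h2
    · refine ⟨i, j, hij, funext fun k => ?_⟩
      rw [pair_apply]
      by_cases h1 : k = i
      · subst h1
        rw [if_pos rfl, if_neg hij, hi1]
      · by_cases h2 : k = j
        · subst h2
          rw [if_neg h1, if_pos rfl, hj1]
        · rw [if_neg h1, if_neg h2, h0 k (Finset.mem_univ k) h1 h2]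
  have hfex : ∀ i, ∃ j, j ≠ i ∧ c i = pair i j := by
    intro i
    obtain ⟨i', j', hij', hpp⟩ := hpair (c i) (hcσ i)
    have hmem : i = i' ∨ i = j' := pair_ne_zero.1 (hpp ▸ hci i)
    rcases hmem with rfl | rfl
    · exact ⟨j', fun h => hij' h.symm, hpp⟩
    · exact ⟨i', fun h => hij' h, by rw [hpp, pair_comm]⟩
  choose f hfne hfc using hfex
  have hinv : Function.Involutive f := by
    intro i
    have h1 : c (f i) = c i := by
      apply huniq (c i) (hcσ i) (f i)
      rw [hfc i]
      exact pair_ne_zero.2 (Or.inr rfl)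
    have h2 : pair (f i) (f (f i)) = pair i (f i) := by
      rw [← hfc (f i), h1, hfc i]
    rcases (pair_eq_iff (Ne.symm (hfne (f i))) (Ne.symm (hfne i))).1 h2 with ⟨h3, -⟩ | ⟨-, h4⟩
    · exact absurd h3 (hfne i)
    · exact h4
  refine ⟨f, hinv, hfne, ?_⟩
  have hFσ : F = mu (2 * m) ∪ σ := by
    rw [hσ, Finset.union_sdiff_of_subset hmu]
  rw [hFσ, ← hIeq, hI]
  congr 1
  exact Finset.image_congr (fun i _ => hfc i)

variable {m : ℕ}

def Phi (f : Fin (2 * m) → Fin (2 * m)) : Finset (Fin (2 * m) → ℕ) :=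
  mu (2 * m) ∪ Finset.image (fun i => pair i (f i)) Finset.univ

lemma Phi_sdiff (f : Fin (2 * m) → Fin (2 * m)) :
    Phi f \ mu (2 * m) = Finset.image (fun i => pair i (f i)) Finset.univ := by
  ext a
  simp only [Phi, Finset.mem_sdiff, Finset.mem_union, Finset.mem_image, Finset.mem_univ,
    true_and]
  constructor
  · rintro ⟨h1 | h2, hnmu⟩
    · exact absurd h1 hnmu
    · exact h2
  · rintro ⟨i, rfl⟩
    exact ⟨Or.inr ⟨i, rfl⟩, pair_notMem_mu⟩

lemma card_pair_image (f : Fin (2 * m) → Fin (2 * m)) (hinv : Function.Involutive f)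
    (hfpf : ∀ i, f i ≠ i) :
    (Finset.image (fun i => pair i (f i)) (Finset.univ : Finset (Fin (2 * m)))).card = m := by
  classical
  have hkey := Finset.card_eq_sum_card_image (fun i => pair i (f i))
    (Finset.univ : Finset (Fin (2 * m)))
  have hfib : ∀ b ∈ Finset.image (fun i => pair i (f i)) (Finset.univ : Finset (Fin (2 * m))),
      (Finset.univ.filter fun j => pair j (f j) = b).card = 2 := by
    intro b hb
    obtain ⟨i, -, rfl⟩ := Finset.mem_image.1 hb
    have hset : (Finset.univ.filter fun j => pair j (f j) = pair i (f i)) = {i, f i} := by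
      ext j
      simp only [Finset.mem_filter, Finset.mem_univ, true_and, Finset.mem_insert,
        Finset.mem_singleton]
      constructor
      · intro hj
        rcases (pair_eq_iff (Ne.symm (hfpf j)) (Ne.symm (hfpf i))).1 hj with ⟨h1, -⟩ | ⟨h1, -⟩
        · exact Or.inl h1
        · exact Or.inr h1
      · rintro (rfl | rfl)
        · rfl
        · rw [hinv i, pair_comm]
    rw [hset, Finset.card_insert_of_notMem (by simp [Ne.symm (hfpf i)]),
      Finset.card_singleton]
  have h2m : 2 * m = 2 * (Finset.image (fun i => pair i (f i))
      (Finset.univ : Finset (Fin (2 * m)))).card := by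
    calc 2 * m = (Finset.univ : Finset (Fin (2 * m))).card := by
          rw [Finset.card_univ, Fintype.card_fin]
      _ = ∑ b ∈ Finset.image (fun i => pair i (f i)) Finset.univ,
            (Finset.univ.filter fun j => pair j (f j) = b).card := hkey
      _ = ∑ _b ∈ Finset.image (fun i => pair i (f i)) Finset.univ, 2 :=
          Finset.sum_congr rfl hfib
      _ = 2 * _ := by rw [Finset.sum_const, smul_eq_mul, mul_comm]
  omega

lemma Phi_props (f : Fin (2 * m) → Fin (2 * m)) (hinv : Function.Involutive f)
    (hfpf : ∀ i, f i ≠ i) :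
    IsFerrers (Phi f) ∧ mu (2 * m) ⊆ Phi f ∧ (Phi f).card = m + 2 * m + 1 ∧
      rdim (Phi f) = 2 * m := by
  classical
  have hdisj : Disjoint (mu (2 * m)) (Finset.image (fun i => pair i (f i)) Finset.univ) := by
    rw [Finset.disjoint_right]
    intro a ha
    obtain ⟨i, -, rfl⟩ := Finset.mem_image.1 ha
    exact pair_notMem_mu
  refine ⟨⟨⟨0, Finset.mem_union_left _ (by simp [mu])⟩, ?_⟩, Finset.subset_union_left, ?_, ?_⟩
  · -- downward closed
    intro a haF y hy
    have hdega : deg a ≤ 2 := by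
      rcases Finset.mem_union.1 haF with h | h
      · exact le_trans (mem_mu_iff_deg.1 h) (by omega)
      · obtain ⟨i, -, rfl⟩ := Finset.mem_image.1 h
        exact le_of_eq (deg_pair _ _)
    have hdegy : deg y ≤ deg a := deg_mono hy
    by_cases hy1 : deg y ≤ 1
    · exact Finset.mem_union_left _ (mem_mu_iff_deg.2 hy1)
    · have hya : y = a := by
        have hsum : ∑ i, y i = ∑ i, a i := by
          have h1 : deg y = 2 := by omega
          have h2 : deg a = 2 := by omega
          show deg y = deg a
          omega
        funext i
        exact (Finset.sum_eq_sum_iff_of_le (fun i _ => hy i)).1 hsum i (Finset.mem_univ i)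
      rwa [hya]
  · -- cardinality
    rw [Phi, Finset.card_union_of_disjoint hdisj, card_mu,
      card_pair_image f hinv hfpf]
    omega
  · -- reduced dimension
    rw [rdim]
    have hall : ∀ i : Fin (2 * m), ∃ a ∈ Phi f \ mu (2 * m), a i ≠ 0 := by
      intro i
      refine ⟨pair i (f i), ?_, pair_ne_zero.2 (Or.inl rfl)⟩
      rw [Phi_sdiff]
      exact Finset.mem_image.2 ⟨i, Finset.mem_univ i, rfl⟩
    rw [Nat.card_congr (Equiv.subtypeUnivEquiv hall)]
    simp [Nat.card_eq_fintype_card]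


lemma nat_card_sigma {ι : Type} [Fintype ι] (β : ι → Type) [∀ i, Finite (β i)] :
    Nat.card ((i : ι) × β i) = ∑ i, Nat.card (β i) := by
  haveI := fun i => Fintype.ofFinite (β i)
  simp [Nat.card_eq_fintype_card]

lemma ext_bijective {α : Type} [DecidableEq α] (a b : α) (hba : b ≠ a) :
    ∃ Φ : {g : {x : α // x ≠ a ∧ x ≠ b} → {x : α // x ≠ a ∧ x ≠ b} //
        Function.Involutive g ∧ ∀ x, g x ≠ x} →
      {f : α → α // (Function.Involutive f ∧ ∀ x, f x ≠ x) ∧ f a = b},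
      Function.Bijective Φ := by
  classical
  refine ⟨fun g => ⟨fun x => if hx : x = a then b else if hx2 : x = b then a
    else (g.1 ⟨x, hx, hx2⟩).1, ⟨?_, ?_⟩, by simp⟩, ?_, ?_⟩
  · -- involutive
    intro x
    by_cases hx : x = a
    · subst hx; simp [hba]
    · by_cases hx2 : x = b
      · subst hx2; simp [hba, hx]
      · simp only [dif_neg hx, dif_neg hx2]
        have h1 := (g.1 ⟨x, hx, hx2⟩).2.1
        have h2 := (g.1 ⟨x, hx, hx2⟩).2.2
        simp only [dif_neg h1, dif_neg h2]
        exact congrArg Subtype.val (g.2.1 ⟨x, hx, hx2⟩)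
  · -- fixed point free
    intro x
    by_cases hx : x = a
    · subst hx; simp only [dif_pos rfl]; exact hba
    · by_cases hx2 : x = b
      · subst hx2; simp only [dif_neg hx, dif_pos rfl]; exact Ne.symm hba
      · simp only [dif_neg hx, dif_neg hx2]
        intro h
        exact g.2.2 ⟨x, hx, hx2⟩ (Subtype.ext h)
  · -- injective
    intro g g' h
    have h' := congrArg Subtype.val h
    ext x
    have hx := x.2.1
    have hx2 := x.2.2
    have := congrFun h' x.1
    simpa [dif_neg hx, dif_neg hx2] using this
  · -- surjective
    rintro ⟨f, ⟨hinv, hfpf⟩, hfa⟩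
    have hfb : f b = a := by rw [← hfa, hinv a]
    have hmem : ∀ x : {x : α // x ≠ a ∧ x ≠ b}, f x.1 ≠ a ∧ f x.1 ≠ b := by
      rintro ⟨x, hx, hx2⟩
      constructor
      · intro h
        exact hx2 (by rw [← hinv x, h, hfa])
      · intro h
        exact hx (by rw [← hinv x, h, hfb])
    refine ⟨⟨fun x => ⟨f x.1, hmem x⟩, ?_, ?_⟩, ?_⟩
    · intro x; exact Subtype.ext (hinv x.1)
    · intro x h; exact hfpf x.1 (congrArg Subtype.val h)
    · ext x
      by_cases hx : x = a
      · subst hx; simp [hfa]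
      · by_cases hx2 : x = b
        · subst hx2; simp [hx, hfb]
        · simp [dif_neg hx, dif_neg hx2]

lemma card_fpf_invol : ∀ (n : ℕ) (α : Type) [DecidableEq α] [Fintype α],
    Fintype.card α = 2 * n →
    Nat.card {f : α → α // Function.Involutive f ∧ ∀ x, f x ≠ x} = (2 * n - 1)‼ := by
  intro n
  induction n with
  | zero =>
    intro α _ _ hcard
    haveI : IsEmpty α := Fintype.card_eq_zero_iff.mp (by simpa using hcard)
    have h0 : ((2 * 0 - 1 : ℕ))‼ = 1 := rfl
    rw [h0, Nat.card_eq_one_iff_unique]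
    constructor
    · constructor
      rintro ⟨f, _⟩ ⟨g, _⟩
      exact Subtype.ext (funext fun x => (IsEmpty.false x).elim)
    · exact ⟨⟨id, fun x => rfl, fun x => (IsEmpty.false x).elim⟩⟩
  | succ k ih =>
    intro α _ _ hcard
    haveI : Nonempty α := Fintype.card_pos_iff.mp (by omega)
    obtain ⟨a⟩ := ‹Nonempty α›
    set S := {f : α → α // Function.Involutive f ∧ ∀ x, f x ≠ x}
    have e1 : S ≃ Σ b : {b : α // b ≠ a},
        {f : α → α // (Function.Involutive f ∧ ∀ x, f x ≠ x) ∧ f a = b.1} := by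
      refine ⟨fun f => ⟨⟨f.1 a, f.2.2 a⟩, ⟨f.1, f.2, rfl⟩⟩, fun p => ⟨p.2.1, p.2.2.1⟩,
        fun f => rfl, ?_⟩
      rintro ⟨⟨b, hb⟩, ⟨f, hf, hfa⟩⟩
      simp only at hfa
      subst hfa
      rfl
    have hfibcard : ∀ b : {b : α // b ≠ a},
        Nat.card {f : α → α // (Function.Involutive f ∧ ∀ x, f x ≠ x) ∧ f a = b.1} =
        (2 * k - 1)‼ := by
      intro b
      obtain ⟨Φ, hΦ⟩ := ext_bijective a b.1 b.2
      rw [← Nat.card_eq_of_bijective Φ hΦ]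
      have hβ : Fintype.card {x : α // x ≠ a ∧ x ≠ b.1} = 2 * k := by
        have h2 : Fintype.card {x : α // x = a ∨ x = b.1} = 2 := by
          rw [Fintype.card_subtype]
          have : Finset.univ.filter (fun x => x = a ∨ x = b.1) = {a, b.1} := by
            ext x; simp [Finset.mem_insert, or_comm]
          rw [this, Finset.card_insert_of_notMem (by simp [Ne.symm b.2]), Finset.card_singleton]
        have e : {x : α // x ≠ a ∧ x ≠ b.1} ≃ {x : α // ¬(x = a ∨ x = b.1)} :=
          Equiv.subtypeEquivRight (fun x => by tauto)
        rw [Fintype.card_congr e, Fintype.card_subtype_compl, h2, hcard]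
        omega
      exact ih {x : α // x ≠ a ∧ x ≠ b.1} hβ
    have hS : Nat.card S = ∑ b : {b : α // b ≠ a}, (2 * k - 1)‼ := by
      rw [Nat.card_congr e1, nat_card_sigma]
      exact Finset.sum_congr rfl (fun b _ => hfibcard b)
    have hne : Fintype.card {b : α // b ≠ a} = 2 * k + 1 := by
      simp only [Ne, Fintype.card_subtype_compl, Fintype.card_subtype_eq, hcard]
      omega
    rw [hS, Finset.sum_const, Finset.card_univ, hne]
    rcases k with _ | k
    · norm_num [Nat.doubleFactorial]
    · have h1 : 2 * (k + 1 + 1) - 1 = (2 * (k + 1) - 1) + 2 := by omega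
      rw [h1, Nat.doubleFactorial_add_two, smul_eq_mul]
      have h2 : 2 * (k + 1) + 1 = 2 * (k + 1) - 1 + 2 := by omega
      rw [h2]


lemma arith (k : ℕ) :
    (2 * (k + 1) - 1)‼ = (2 * (k + 1))! / (2 ^ (k + 1) * (k + 1)!) := by
  have h3 : 2 * (k + 1) = 2 * k + 1 + 1 := by omega
  have h4 : 2 * (k + 1) - 1 = 2 * k + 1 := by omega
  rw [h4, h3, Nat.factorial_eq_mul_doubleFactorial (2 * k + 1), ← h3,
    Nat.doubleFactorial_two_mul]
  exact (Nat.mul_div_cancel_left _ (by positivity)).symm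


lemma arith' (m : ℕ) (hm : 1 ≤ m) :
    (2 * m - 1)‼ = (2 * m)! / (2 ^ m * m !) := by
  obtain ⟨k, rfl⟩ : ∃ k, m = k + 1 := ⟨m - 1, by omega⟩
  exact arith k

lemma statement6' (m : ℕ) (hm : 1 ≤ m) :
    Cmat m (2 * m) = Nat.factorial (2 * m) / (2 ^ m * Nat.factorial m) := by
  classical
  have hmain : Cmat m (2 * m)
      = Nat.card {f : Fin (2 * m) → Fin (2 * m) // Function.Involutive f ∧ ∀ i, f i ≠ i} := by
    rw [Cmat]
    refine (Nat.card_eq_of_bijective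
      (fun f => ⟨Phi f.1, (Phi_props f.1 f.2.1 f.2.2).1, (Phi_props f.1 f.2.1 f.2.2).2.1,
        (Phi_props f.1 f.2.1 f.2.2).2.2.1, (Phi_props f.1 f.2.1 f.2.2).2.2.2⟩)
      ⟨?_, ?_⟩).symm
    · -- injective
      rintro ⟨f, hfinv, hffpf⟩ ⟨g, hginv, hgfpf⟩ h
      have hPhi : Phi f = Phi g := congrArg Subtype.val h
      have himg : Finset.image (fun i => pair i (f i)) Finset.univ
          = Finset.image (fun i => pair i (g i)) Finset.univ := by
        rw [← Phi_sdiff f, ← Phi_sdiff g, hPhi]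
      refine Subtype.ext (funext fun i => ?_)
      have hmem : pair i (f i) ∈ Finset.image (fun j => pair j (g j)) Finset.univ := by
        rw [← himg]
        exact Finset.mem_image.2 ⟨i, Finset.mem_univ i, rfl⟩
      obtain ⟨j, -, hj⟩ := Finset.mem_image.1 hmem
      rcases (pair_eq_iff (Ne.symm (hgfpf j)) (Ne.symm (hffpf i))).1 hj with ⟨rfl, h2⟩ | ⟨h1, h2⟩
      · exact h2.symm
      · -- j = f i and g j = i
        have : g (f i) = i := h1 ▸ h2
        have := congrArg g this
        rw [hginv (f i)] at this
        exact this
    · -- surjective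
      rintro ⟨F, hF, hmu, hcard, hrdim⟩
      obtain ⟨f, hinv, hfpf, hFeq⟩ := structure_thm F hF hmu hcard hrdim
      exact ⟨⟨f, hinv, hfpf⟩, Subtype.ext hFeq.symm⟩
  have hcount := card_fpf_invol m (Fin (2 * m)) (by simp)
  rw [hmain, hcount]
  exact arith' m hm

end S6aux

/-- `c_{m,2m} = (2m−1)!! = (2m)! / (2^m · m!)` for every `m ≥ 1`. -/
theorem statement6 (m : ℕ) (hm : 1 ≤ m) :
    Cmat m (2 * m) = Nat.factorial (2 * m) / (2 ^ m * Nat.factorial m) := by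
  exact S6aux.statement6' m hm
end

section
/- Let λ ⊆ ℕ^x be a Ferrers diagram with exactly m + x + 1 elements that contains μ_x and has reduced dimension x, and suppose 3m < 2x (i.e. the density m/x is below 2/3). Then at least 2x − 3m of the components of the skew diagram λ ∖ μ_x are of type σ_2. -/
lemma exists_parent {V : Type*} (G : SimpleGraph V) {i v : V}
    (hr : G.Reachable i v) (hne : v ≠ i) :
    ∃ w, G.Adj v w ∧ G.dist i w + 1 = G.dist i v := by
  obtain ⟨p, hp⟩ := hr.symm.exists_walk_length_eq_dist
  cases p with
  | nil => exact absurd rfl hne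
  | @cons _ w _ h q =>
    refine ⟨w, h, ?_⟩
    have h1 : G.dist w i ≤ q.length := SimpleGraph.dist_le q
    have h2 : q.length + 1 = G.dist v i := by simpa using hp
    obtain ⟨r, hr'⟩ := (hr.trans h.reachable).exists_walk_length_eq_dist
    have h3 : G.dist i v ≤ G.dist i w + 1 := by
      have := SimpleGraph.dist_le (r.concat h.symm)
      simpa [SimpleGraph.Walk.length_concat, hr'] using this
    have h4 : 1 ≤ G.dist i v := hr.pos_dist_of_ne (Ne.symm hne)
    have h5 : G.dist w i = G.dist i w := SimpleGraph.dist_comm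
    have h6 : G.dist v i = G.dist i v := SimpleGraph.dist_comm
    omega

lemma key {x : ℕ} (σ : Finset (Fin x → ℕ))
    (h0 : ∀ a ∈ σ, a ≠ 0)
    (hpair : ∀ a ∈ σ, ∀ i j : Fin x, i ≠ j → a i ≠ 0 → a j ≠ 0 →
      Pi.single i 1 + Pi.single j 1 ∈ σ)
    (huse : ∀ i : Fin x, ∃ a ∈ σ, a i ≠ 0) :
    2 * x ≤ 3 * σ.card +
      Nat.card {B : Set (Fin x) // IsBlock σ B ∧ IsSigma2 σ B} := by
  classical
  rcases Nat.eq_zero_or_pos x with hx | hx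
  · subst hx; simp
  have i0 : Fin x := ⟨0, hx⟩
  -- the graph
  set G : SimpleGraph (Fin x) :=
    { Adj := fun i j => i ≠ j ∧ Pi.single i 1 + Pi.single j 1 ∈ σ
      symm := by
        constructor
        intro i j h
        exact ⟨h.1.symm, by rw [add_comm]; exact h.2⟩
      loopless := ⟨fun i h => h.1 rfl⟩ } with hG
  have hGadj : ∀ i j, G.Adj i j ↔ (i ≠ j ∧ Pi.single i 1 + Pi.single j 1 ∈ σ) := by
    intro i j; rw [hG]
  have hedge_val : ∀ i j : Fin x, (Pi.single i 1 + Pi.single j 1 : Fin x → ℕ) i ≠ 0 := by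
    intro i j
    simp [Pi.single_apply]
  -- touching coordinates are reachable
  have hTreach : ∀ a ∈ σ, ∀ i j : Fin x, a i ≠ 0 → a j ≠ 0 → G.Reachable i j := by
    intro a ha i j hi hj
    by_cases hij : i = j
    · subst hij; rfl
    · exact SimpleGraph.Adj.reachable ((hGadj i j).2 ⟨hij, hpair a ha i j hij hi hj⟩)
  -- EqvGen Touches = Reachable
  have hEG : ∀ i j, Relation.EqvGen (Touches σ) i j ↔ G.Reachable i j := by
    intro i j
    constructor
    · intro h
      induction h with
      | rel a b hab => obtain ⟨c, hc, h1, h2⟩ := hab; exact hTreach c hc a b h1 h2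
      | refl a => rfl
      | symm a b _ ih => exact ih.symm
      | trans a b c _ _ ih1 ih2 => exact ih1.trans ih2
    · intro h
      obtain ⟨p⟩ := h
      induction p with
      | nil => exact Relation.EqvGen.refl _
      | @cons u w _ h q ih =>
        refine Relation.EqvGen.trans _ _ _ (Relation.EqvGen.rel _ _ ?_) ih
        refine ⟨Pi.single u 1 + Pi.single w 1, ((hGadj u w).1 h).2, hedge_val u w, ?_⟩
        have := hedge_val w u
        rwa [add_comm] at this
  -- classes and representatives
  set C : Fin x → Finset (Fin x) :=
    fun i => Finset.univ.filter (fun j => G.Reachable i j) with hC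
  have hCmem : ∀ i, i ∈ C i := by
    intro i
    simp only [hC, Finset.mem_filter, Finset.mem_univ, true_and]
    exact ⟨SimpleGraph.Walk.nil⟩
  have hCne : ∀ i, (C i).Nonempty := fun i => ⟨i, hCmem i⟩
  have hCeq : ∀ i j, G.Reachable i j → C i = C j := by
    intro i j hij
    ext k
    simp only [hC, Finset.mem_filter, Finset.mem_univ, true_and]
    exact ⟨fun h => hij.symm.trans h, fun h => hij.trans h⟩
  set rep : Fin x → Fin x := fun i => (C i).min' (hCne i) with hrep
  have hrep_reach : ∀ i, G.Reachable i (rep i) := by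
    intro i
    have := (C i).min'_mem (hCne i)
    simpa [hC] using this
  have hrep_eq : ∀ i j, G.Reachable i j → rep i = rep j := by
    intro i j h; simp only [hrep]; congr 1; exact hCeq i j h
  have hrep_idem : ∀ i, rep (rep i) = rep i := fun i => (hrep_eq i (rep i) (hrep_reach i)).symm
  set R : Finset (Fin x) := Finset.univ.filter (fun i => rep i = i) with hR
  -- assignment of σ-elements to classes
  set g : (Fin x → ℕ) → Fin x :=
    fun a => rep (if h : ∃ i, a i ≠ 0 then h.choose else i0) with hg
  have hgval : ∀ a ∈ σ, ∀ i, a i ≠ 0 → g a = rep i := by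
    intro a ha i hi
    have hex : ∃ i, a i ≠ 0 := ⟨i, hi⟩
    simp only [hg, dif_pos hex]
    exact (hrep_eq _ _ (hTreach a ha _ _ hex.choose_spec hi))
  -- fiberwise counting
  have hx_sum : x = ∑ i ∈ R, (Finset.univ.filter (fun j => rep j = i)).card := by
    have := Finset.card_eq_sum_card_fiberwise
      (f := rep) (s := (Finset.univ : Finset (Fin x))) (t := R)
      (by intro j _; simp [hR, hrep_idem])
    simpa using this
  have hm_sum : σ.card = ∑ i ∈ R, (σ.filter (fun a => g a = i)).card := by
    refine Finset.card_eq_sum_card_fiberwise ?_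
    intro a ha
    have hex : ∃ i, a i ≠ 0 := by
      by_contra h
      push_neg at h
      exact h0 a ha (funext fun i => h i)
    obtain ⟨i, hi⟩ := hex
    rw [hgval a ha i hi]
    simp [hR, hrep_idem]
  -- fibers are classes
  have hfib : ∀ i ∈ R, Finset.univ.filter (fun j => rep j = i) = C i := by
    intro i hi
    have hrepi : rep i = i := by simpa [hR] using hi
    ext j
    simp only [Finset.mem_filter, Finset.mem_univ, true_and, hC]
    constructor
    · intro h
      exact ((h ▸ hrep_reach j) : G.Reachable j i).symm
    · intro h
      rw [hrep_eq j i h.symm, hrepi]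
  -- the key per-class inequality
  have hclass : ∀ i ∈ R,
      2 * (Finset.univ.filter (fun j => rep j = i)).card ≤
        3 * (σ.filter (fun a => g a = i)).card +
          (if IsSigma2 σ {j | Relation.EqvGen (Touches σ) i j} then 1 else 0) := by
    intro i hi
    have hrepi : rep i = i := by simpa [hR] using hi
    rw [hfib i hi]
    have hreachC : ∀ v ∈ C i, G.Reachable i v := by
      intro v hv
      simpa [hC] using hv
    -- s ≥ 1
    have hs1 : 1 ≤ (σ.filter (fun a => g a = i)).card := by
      obtain ⟨a, ha, hai⟩ := huse i
      refine Finset.card_pos.mpr ⟨a, Finset.mem_filter.mpr ⟨ha, ?_⟩⟩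
      rw [hgval a ha i hai, hrepi]
    -- choose parents
    have hparex : ∀ v : Fin x, ∃ w : Fin x,
        v ∈ (C i).erase i → (G.Adj v w ∧ G.dist i w + 1 = G.dist i v) := by
      intro v
      by_cases hv : v ∈ (C i).erase i
      · obtain ⟨w, hw1, hw2⟩ := exists_parent G
          (hreachC v (Finset.mem_of_mem_erase hv)) (Finset.ne_of_mem_erase hv)
        exact ⟨w, fun _ => ⟨hw1, hw2⟩⟩
      · exact ⟨i0, fun h => absurd h hv⟩
    choose par hpar using hparex
    -- s ≥ b - 1 via injection v ↦ e_v + e_(par v)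
    have hmem_elt : ∀ v ∈ (C i).erase i,
        (Pi.single v 1 + Pi.single (par v) 1 : Fin x → ℕ) ∈ σ.filter (fun a => g a = i) := by
      intro v hv
      obtain ⟨hadj, _⟩ := hpar v hv
      have helt : (Pi.single v 1 + Pi.single (par v) 1 : Fin x → ℕ) ∈ σ :=
        ((hGadj _ _).1 hadj).2
      refine Finset.mem_filter.mpr ⟨helt, ?_⟩
      rw [hgval _ helt v (hedge_val v (par v)),
        ← hrep_eq i v (hreachC v (Finset.mem_of_mem_erase hv)), hrepi]
    have hs2 : ((C i).erase i).card ≤ (σ.filter (fun a => g a = i)).card := by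
      refine Finset.card_le_card_of_injOn
        (fun v => Pi.single v 1 + Pi.single (par v) 1) hmem_elt ?_
      intro v hv v' hv' heq
      by_contra hne
      have heq' : (Pi.single v 1 + Pi.single (par v) 1 : Fin x → ℕ) =
          Pi.single v' 1 + Pi.single (par v') 1 := heq
      have hvv' : v = par v' := by
        have h1 : (Pi.single v' 1 + Pi.single (par v') 1 : Fin x → ℕ) v ≠ 0 := by
          rw [← heq']; exact hedge_val v (par v)
        by_contra hcon
        apply h1
        simp [Pi.single_apply, hne, hcon]
      have hv'v : v' = par v := by
        have h1 : (Pi.single v 1 + Pi.single (par v) 1 : Fin x → ℕ) v' ≠ 0 := by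
          rw [heq']; exact hedge_val v' (par v')
        by_contra hcon
        apply h1
        have hne' : ¬v' = v := fun h => hne h.symm
        simp [Pi.single_apply, hne', hcon]
      obtain ⟨_, hd1⟩ := hpar v (Finset.mem_coe.mp hv)
      obtain ⟨_, hd2⟩ := hpar v' (Finset.mem_coe.mp hv')
      rw [← hvv'] at hd2
      rw [← hv'v] at hd1
      omega
    have hberase : ((C i).erase i).card = (C i).card - 1 :=
      Finset.card_erase_of_mem (hCmem i)
    have hbpos : 1 ≤ (C i).card := Finset.card_pos.mpr (hCne i)
    by_cases hcase : 2 * (C i).card ≤ 3 * (σ.filter (fun a => g a = i)).card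
    · exact le_trans hcase (Nat.le_add_right _ _)
    -- remaining case : b = 2, s = 1
    have hb2 : (C i).card = 2 := by omega
    have hs_eq : (σ.filter (fun a => g a = i)).card = 1 := by omega
    obtain ⟨u, v, huv, hCuv⟩ := Finset.card_eq_two.mp hb2
    have hiuv : i = u ∨ i = v := by
      have := hCmem i
      rw [hCuv] at this
      simpa using this
    obtain ⟨j, hji, hCij⟩ : ∃ j, j ≠ i ∧ C i = {i, j} := by
      rcases hiuv with h | h
      · exact ⟨v, by rw [← h] at huv; exact huv.symm, by rw [hCuv, h]⟩
      · exact ⟨u, by rw [← h] at huv; exact huv, by rw [hCuv, h, Finset.pair_comm]⟩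
    have hjC : j ∈ C i := by rw [hCij]; simp
    have hreachij : G.Reachable i j := hreachC j hjC
    -- direct edge between i and j
    have hadjji : G.Adj j i := by
      obtain ⟨w, hadj, _⟩ := exists_parent G hreachij hji
      have hwC : w ∈ C i := by
        simp only [hC, Finset.mem_filter, Finset.mem_univ, true_and]
        exact hreachij.trans hadj.reachable
      have hwij : w = i ∨ w = j := by
        rw [hCij] at hwC; simpa using hwC
      rcases hwij with h | h
      · rwa [h] at hadj
      · exact absurd h.symm hadj.ne
    have helt : (Pi.single i 1 + Pi.single j 1 : Fin x → ℕ) ∈ σ := by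
      obtain ⟨-, hmem⟩ := (hGadj j i).1 hadjji
      rwa [add_comm] at hmem
    have hrepj : rep j = i := by rw [← hrep_eq i j hreachij, hrepi]
    -- the filter is exactly {e_i + e_j}
    have hfilt : σ.filter (fun a => g a = i) = {Pi.single i 1 + Pi.single j 1} := by
      obtain ⟨c, hc⟩ := Finset.card_eq_one.mp hs_eq
      have hein : (Pi.single i 1 + Pi.single j 1 : Fin x → ℕ) ∈ σ.filter (fun a => g a = i) := by
        refine Finset.mem_filter.mpr ⟨helt, ?_⟩
        rw [hgval _ helt i (hedge_val i j), hrepi]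
      rw [hc] at hein ⊢
      rw [Finset.mem_singleton.mp hein]
    -- block as a set
    have hBset : {k | Relation.EqvGen (Touches σ) i k} = ({i, j} : Set (Fin x)) := by
      ext k
      simp only [Set.mem_setOf_eq, hEG, Set.mem_insert_iff, Set.mem_singleton_iff]
      constructor
      · intro h
        have : k ∈ C i := by
          simp only [hC, Finset.mem_filter, Finset.mem_univ, true_and]; exact h
        rw [hCij] at this; simpa using this
      · rintro (rfl | rfl)
        · exact ⟨SimpleGraph.Walk.nil⟩
        · exact hreachij
    have hsig : IsSigma2 σ {k | Relation.EqvGen (Touches σ) i k} := by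
      refine ⟨i, j, hji.symm, hBset, ?_⟩
      rw [hBset]
      ext a
      simp only [Set.mem_setOf_eq, Set.mem_singleton_iff, Finset.coe_sort_coe, Set.mem_sep_iff,
        Finset.mem_coe]
      constructor
      · rintro ⟨ha, hsupp⟩
        have hex : ∃ k, a k ≠ 0 := by
          by_contra h
          push_neg at h
          exact h0 a ha (funext fun k => h k)
        obtain ⟨k, hk⟩ := hex
        have hkij : k = i ∨ k = j := by
          have := hsupp k hk
          simpa using this
        have hga : g a = i := by
          rcases hkij with rfl | rfl
          · rw [hgval a ha k hk, hrepi]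
          · rw [hgval a ha k hk, hrepj]
        have : a ∈ σ.filter (fun a => g a = i) := Finset.mem_filter.mpr ⟨ha, hga⟩
        rw [hfilt] at this
        exact Finset.mem_singleton.mp this
      · rintro rfl
        refine ⟨helt, ?_⟩
        intro k hk
        by_contra hcon
        simp only [Set.mem_insert_iff, Set.mem_singleton_iff] at hcon
        push_neg at hcon
        apply hk
        simp [Pi.single_apply, hcon.1, hcon.2]
    rw [if_pos hsig]
    omega
  -- summing up
  have hsum : 2 * x ≤ 3 * σ.card +
      (R.filter (fun i => IsSigma2 σ {j | Relation.EqvGen (Touches σ) i j})).card := by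
    calc 2 * x = 2 * ∑ i ∈ R, (Finset.univ.filter (fun j => rep j = i)).card := by
          rw [← hx_sum]
      _ = ∑ i ∈ R, 2 * (Finset.univ.filter (fun j => rep j = i)).card := Finset.mul_sum _ _ _
      _ ≤ ∑ i ∈ R, (3 * (σ.filter (fun a => g a = i)).card +
          (if IsSigma2 σ {j | Relation.EqvGen (Touches σ) i j} then 1 else 0)) :=
          Finset.sum_le_sum hclass
      _ = 3 * σ.card +
          (R.filter (fun i => IsSigma2 σ {j | Relation.EqvGen (Touches σ) i j})).card := by
          rw [Finset.sum_add_distrib, ← Finset.mul_sum, ← hm_sum, Finset.card_filter]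
  -- injection into the block subtype
  have hinj : (R.filter (fun i => IsSigma2 σ {j | Relation.EqvGen (Touches σ) i j})).card ≤
      Nat.card {B : Set (Fin x) // IsBlock σ B ∧ IsSigma2 σ B} := by
    rw [Nat.card_eq_fintype_card, ← Fintype.card_coe]
    refine Fintype.card_le_of_injective
      (fun p => ⟨{j | Relation.EqvGen (Touches σ) p.1 j}, ⟨p.1, rfl⟩,
        (Finset.mem_filter.mp p.2).2⟩) ?_
    rintro ⟨i, hi⟩ ⟨i', hi'⟩ h
    have hBB : {j | Relation.EqvGen (Touches σ) i j} = {j | Relation.EqvGen (Touches σ) i' j} := by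
      simpa using congrArg Subtype.val h
    have : Relation.EqvGen (Touches σ) i i' := by
      have : i' ∈ {j | Relation.EqvGen (Touches σ) i' j} := Relation.EqvGen.refl _
      rw [← hBB] at this
      exact this
    have hri : rep i = i := by
      have := (Finset.mem_filter.mp hi).1; simpa [hR] using Finset.mem_filter.mp hi |>.1
    have hri' : rep i' = i' := by simpa [hR] using (Finset.mem_filter.mp hi').1
    have : i = i' := by
      have hr := hrep_eq i i' ((hEG i i').1 this)
      rw [hri, hri'] at hr; exact hr
    exact Subtype.ext this
  omega

/-- if `λ ⊆ ℕ^x` is a Ferrers diagram with `m+x+1` elements containing `μ_x`,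
of reduced dimension `x`, and `3m < 2x`, then at least `2x − 3m` components of `λ ∖ μ_x`
are of type `σ₂`. -/
theorem statement8 (m x : ℕ) (F : Finset (Fin x → ℕ))
    (hF : IsFerrers F) (hmu : mu x ⊆ F) (hcard : F.card = m + x + 1)
    (hrd : rdim F = x) (hdensity : 3 * m < 2 * x) :
    2 * x - 3 * m ≤
      Nat.card {B : Set (Fin x) // IsBlock (F \ mu x) B ∧ IsSigma2 (F \ mu x) B} := by
  classical
  set σ : Finset (Fin x → ℕ) := F \ mu x with hσ
  -- basic facts about mu
  have hmu0 : (0 : Fin x → ℕ) ∈ mu x := by simp [mu]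
  have hmucard : (mu x).card = x + 1 := by
    rw [mu, Finset.card_insert_of_notMem, Finset.card_image_of_injective, Finset.card_univ,
      Fintype.card_fin]
    · intro i j hij
      by_contra hne
      have := congrFun hij i
      simp [Pi.single_apply, hne] at this
    · simp only [Finset.mem_image, not_exists]
      intro i hi
      have := congrFun hi.2 i
      simp [Pi.single_apply] at this
  have hσcard : σ.card = m := by
    rw [hσ, Finset.card_sdiff_of_subset hmu, hcard, hmucard]
    omega
  -- hypotheses of the key lemma
  have h0 : ∀ a ∈ σ, a ≠ 0 := by
    intro a ha h
    rw [hσ, Finset.mem_sdiff] at ha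
    exact ha.2 (h ▸ hmu0)
  have hpair : ∀ a ∈ σ, ∀ i j : Fin x, i ≠ j → a i ≠ 0 → a j ≠ 0 →
      Pi.single i 1 + Pi.single j 1 ∈ σ := by
    intro a ha i j hij hi hj
    rw [hσ, Finset.mem_sdiff] at ha ⊢
    constructor
    · refine hF.2 a ha.1 _ ?_
      intro k
      by_cases hk : k = i
      · subst hk
        have : (Pi.single k 1 + Pi.single j 1 : Fin x → ℕ) k = 1 := by
          simp [Pi.single_apply, fun h => hij h]
        rw [this]; omega
      · by_cases hk' : k = j
        · subst hk'
          have : (Pi.single i 1 + Pi.single k 1 : Fin x → ℕ) k = 1 := by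
            simp [Pi.single_apply, hk]
          rw [this]; omega
        · have : (Pi.single i 1 + Pi.single j 1 : Fin x → ℕ) k = 0 := by
            simp [Pi.single_apply, hk, hk']
          rw [this]; omega
    · intro hmem
      rw [mu, Finset.mem_insert] at hmem
      rcases hmem with h | h
      · have := congrFun h i
        simp [Pi.single_apply, fun h => hij h] at this
      · rw [Finset.mem_image] at h
        obtain ⟨k, -, hk⟩ := h
        have h1 := congrFun hk i
        have h2 := congrFun hk j
        have hji : ¬ j = i := fun hh => hij hh.symm
        simp only [Pi.add_apply, Pi.single_apply, if_pos rfl, if_neg hij, if_neg hji, if_true] at h1 h2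
        have hki : i = k := by
          by_contra hcon
          rw [if_neg hcon] at h1
          omega
        have hkj : j = k := by
          by_contra hcon
          rw [if_neg hcon] at h2
          omega
        exact hij (hki.trans hkj.symm)
  have huse : ∀ i : Fin x, ∃ a ∈ σ, a i ≠ 0 := by
    intro i
    by_contra hcon
    have hlt : Nat.card {i : Fin x // ∃ a ∈ F \ mu x, a i ≠ 0} < x := by
      rw [Nat.card_eq_fintype_card]
      calc Fintype.card {i : Fin x // ∃ a ∈ F \ mu x, a i ≠ 0}
          < Fintype.card (Fin x) := Fintype.card_subtype_lt (x := i) (by simpa [hσ] using hcon)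
        _ = x := Fintype.card_fin x
    have hlt' : rdim F < x := by
      have hrdim : rdim F = Nat.card {i : Fin x // ∃ a ∈ F \ mu x, a i ≠ 0} := rfl
      rw [hrdim]
      exact hlt
    exact absurd hrd (Nat.ne_of_lt hlt')
  have hkey := key σ h0 hpair huse
  rw [hσcard] at hkey
  omega
end

section
/- For all m ≥ 1 and x ≥ 1 with 3m < 2x, d_{m,x} = 0; that is, there is no Ferrers diagram λ ⊆ ℕ^x with m + x + 1 elements containing μ_x, having reduced dimension x, and having no component of the skew diagram of type σ_2, when the density m/x is below 2/3. -/
section Aux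

/-- Predecessor on a geodesic. -/
lemma exists_pred {V : Type*} (G : SimpleGraph V) {r v : V} (h : G.Reachable r v)
    (hne : v ≠ r) : ∃ u, G.Adj u v ∧ G.Reachable r u ∧ G.dist r u + 1 = G.dist r v := by
  obtain ⟨p, hp⟩ := h.exists_walk_length_eq_dist
  cases hw : p.reverse with
  | nil => exact absurd rfl hne
  | @cons _ u _ h' q =>
    have hlen : q.length + 1 = p.length := by
      have := congrArg SimpleGraph.Walk.length hw
      simpa [SimpleGraph.Walk.length_reverse] using this.symm
    have hru : G.Reachable r u := ⟨q.reverse⟩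
    have hd1 : G.dist r u ≤ q.length := by
      simpa [SimpleGraph.Walk.length_reverse] using G.dist_le q.reverse
    obtain ⟨w2, hw2⟩ := hru.exists_walk_length_eq_dist
    have hd2 : G.dist r v ≤ G.dist r u + 1 := by
      simpa [SimpleGraph.Walk.length_concat, hw2] using G.dist_le (w2.concat h'.symm)
    exact ⟨u, h'.symm, hru, by omega⟩



lemma pair_apply {x : ℕ} (i j k : Fin x) :
    (Pi.single i 1 + Pi.single j 1 : Fin x → ℕ) k
      = (if k = i then 1 else 0) + (if k = j then 1 else 0) := by
  simp [Pi.single_apply]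

lemma mem_mu_iff {x : ℕ} (a : Fin x → ℕ) :
    a ∈ mu x ↔ a = 0 ∨ ∃ i, a = Pi.single i 1 := by
  simp [mu, eq_comm]

lemma mu_card (x : ℕ) : (mu x).card = x + 1 := by
  have hinj : Function.Injective (fun i : Fin x => (Pi.single i 1 : Fin x → ℕ)) := by
    intro i j hij
    by_contra hne
    have := congrFun hij i
    simp [Pi.single_apply, hne] at this
  rw [mu, Finset.card_insert_of_notMem, Finset.card_image_of_injective _ hinj,
    Finset.card_univ, Fintype.card_fin]
  simp only [Finset.mem_image, Finset.mem_univ, true_and]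
  rintro ⟨i, hi⟩
  have := congrFun hi i
  simp [Pi.single_apply] at this

lemma pair_not_mem_mu {x : ℕ} {i j : Fin x} (hij : i ≠ j) :
    Pi.single i 1 + Pi.single j 1 ∉ mu x := by
  rw [mem_mu_iff]
  rintro (h0 | ⟨k, hk⟩)
  · have := congrFun h0 i
    rw [pair_apply] at this
    simp [hij] at this
  · have hi := congrFun hk i
    have hj := congrFun hk j
    rw [pair_apply] at hi hj
    simp only [if_pos rfl, Pi.single_apply] at hi hj
    rw [if_neg hij] at hi
    rw [if_neg (Ne.symm hij)] at hj
    by_cases h1 : i = k <;> by_cases h2 : j = k <;> simp_all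

def skewGraph {x : ℕ} (σ : Finset (Fin x → ℕ)) : SimpleGraph (Fin x) where
  Adj i j := i ≠ j ∧ Pi.single i 1 + Pi.single j 1 ∈ σ
  symm := by
    constructor
    intro i j ⟨h1, h2⟩
    exact ⟨h1.symm, by rwa [add_comm]⟩
  loopless := ⟨fun i hh => hh.1 rfl⟩

noncomputable def compOf {x : ℕ} (σ : Finset (Fin x → ℕ)) (hx : 0 < x) (a : Fin x → ℕ) :
    (skewGraph σ).ConnectedComponent :=
  if h : ∃ i, a i ≠ 0 then (skewGraph σ).connectedComponentMk h.choose
  else (skewGraph σ).connectedComponentMk ⟨0, hx⟩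

end Aux

/-- `d_{m,x} = 0` for all `m ≥ 1`, `x ≥ 1` with `3m < 2x`. -/


theorem statement10 (m x : ℕ) (hm : 1 ≤ m) (hx : 1 ≤ x) (h : 3 * m < 2 * x) :
    Dmat m x = 0 := by
  classical
  rw [Dmat, Nat.card_eq_zero]
  left
  constructor
  rintro ⟨F, hFerr, hmuF, hcard, hrd, hblocks⟩
  set σ : Finset (Fin x → ℕ) := F \ mu x with hσdef
  have hσcard : σ.card = m := by
    rw [hσdef, Finset.card_sdiff_of_subset hmuF, hcard, mu_card]
    omega
  have hσF : ∀ a ∈ σ, a ∈ F := fun a ha => (Finset.mem_sdiff.mp ha).1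
  have hσmu : ∀ a ∈ σ, a ∉ mu x := fun a ha => (Finset.mem_sdiff.mp ha).2
  have hσne : ∀ a ∈ σ, ∃ i, a i ≠ 0 := by
    intro a ha
    by_contra hc
    push_neg at hc
    exact hσmu a ha ((mem_mu_iff a).mpr (Or.inl (funext hc)))
  have hpair : ∀ a ∈ σ, ∀ i j : Fin x, i ≠ j → a i ≠ 0 → a j ≠ 0 →
      Pi.single i 1 + Pi.single j 1 ∈ σ := by
    intro a ha i j hij hi hj
    rw [hσdef, Finset.mem_sdiff]
    refine ⟨hFerr.2 a (hσF a ha) _ ?_, pair_not_mem_mu hij⟩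
    intro k
    rw [pair_apply]
    by_cases h1 : k = i
    · subst h1
      rw [if_pos rfl, if_neg hij]
      omega
    · by_cases h2 : k = j
      · subst h2
        rw [if_neg h1, if_pos rfl]
        omega
      · simp [h1, h2]
  set G := skewGraph σ with hGdef
  have hTR : ∀ i j : Fin x, Touches σ i j → G.Reachable i j := by
    rintro i j ⟨a, ha, hi, hj⟩
    by_cases hij : i = j
    · subst hij
      exact SimpleGraph.Reachable.refl i
    · exact SimpleGraph.Adj.reachable ⟨hij, hpair a ha i j hij hi hj⟩
  have hRT : ∀ i j : Fin x, G.Adj i j → Touches σ i j := by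
    intro i j hadj
    refine ⟨Pi.single i 1 + Pi.single j 1, hadj.2, ?_, ?_⟩ <;>
      rw [pair_apply] <;> simp [hadj.1, Ne.symm hadj.1]
  have hER : ∀ i j : Fin x, Relation.EqvGen (Touches σ) i j ↔ G.Reachable i j := by
    intro i j
    constructor
    · intro hh
      induction hh with
      | rel a b hab => exact hTR a b hab
      | refl a => exact SimpleGraph.Reachable.refl a
      | symm a b _ ih => exact ih.symm
      | trans a b c _ _ ih1 ih2 => exact ih1.trans ih2
    · intro hh
      obtain ⟨w⟩ := hh
      induction w with
      | nil => exact Relation.EqvGen.refl _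
      | cons hadj w ih =>
        exact Relation.EqvGen.trans _ _ _ (Relation.EqvGen.rel _ _ (hRT _ _ hadj)) ih
  set π : Fin x → G.ConnectedComponent := G.connectedComponentMk with hπdef
  set fE : (Fin x → ℕ) → G.ConnectedComponent := compOf σ hx with hfEdef
  have hfE : ∀ a ∈ σ, ∀ i, a i ≠ 0 → fE a = π i := by
    intro a ha i hi
    have hex : ∃ k, a k ≠ 0 := ⟨i, hi⟩
    rw [hfEdef]
    show compOf σ hx a = π i
    rw [compOf, dif_pos hex]
    exact SimpleGraph.ConnectedComponent.sound (hTR _ _ ⟨a, ha, hex.choose_spec, hi⟩)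
  set t : Finset G.ConnectedComponent := Finset.univ.image π with htdef
  have hsum_m : σ.card = ∑ q ∈ t, (σ.filter (fun a => fE a = q)).card := by
    apply Finset.card_eq_sum_card_fiberwise
    intro a ha
    obtain ⟨i, hi⟩ := hσne a ha
    rw [hfE a ha i hi, htdef]
    exact Finset.mem_image_of_mem _ (Finset.mem_univ i)
  have hsum_x : (Finset.univ : Finset (Fin x)).card
      = ∑ q ∈ t, (Finset.univ.filter (fun i => π i = q)).card := by
    apply Finset.card_eq_sum_card_fiberwise
    intro i _
    exact Finset.mem_image_of_mem _ (Finset.mem_univ i)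
  have hall : ∀ i : Fin x, ∃ a ∈ σ, a i ≠ 0 := by
    have h1 : rdim F = (Finset.univ.filter (fun i : Fin x => ∃ a ∈ F \ mu x, a i ≠ 0)).card := by
      rw [rdim, Nat.card_eq_fintype_card, Fintype.card_subtype]
    rw [h1] at hrd
    have h2 : (Finset.univ.filter (fun i : Fin x => ∃ a ∈ F \ mu x, a i ≠ 0)) = Finset.univ :=
      Finset.eq_univ_of_card _ (by rw [hrd, Fintype.card_fin])
    intro i
    have hmem : i ∈ Finset.univ.filter (fun i : Fin x => ∃ a ∈ F \ mu x, a i ≠ 0) := by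
      rw [h2]
      exact Finset.mem_univ i
    exact (Finset.mem_filter.mp hmem).2
  have key : ∀ q ∈ t, 2 * (Finset.univ.filter (fun i => π i = q)).card
      ≤ 3 * (σ.filter (fun a => fE a = q)).card := by
    intro q hq
    obtain ⟨root, -, hroot⟩ := Finset.mem_image.mp hq
    set B := Finset.univ.filter (fun i => π i = q) with hBdef
    set M := σ.filter (fun a => fE a = q) with hMdef
    have hrootB : root ∈ B := by
      rw [hBdef]
      simp [hroot]
    have hBreach : ∀ v ∈ B, G.Reachable root v := by
      intro v hv
      have hv2 : π v = q := (Finset.mem_filter.mp hv).2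
      exact SimpleGraph.ConnectedComponent.exact (hroot.trans hv2.symm)
    have hM1 : 1 ≤ M.card := by
      obtain ⟨a, ha, hai⟩ := hall root
      have : a ∈ M := Finset.mem_filter.mpr ⟨ha, by rw [hfE a ha root hai, hroot]⟩
      exact Finset.card_pos.mpr ⟨a, this⟩
    have hpred : ∀ v : Fin x, ∃ u, v ∈ B.erase root →
        (G.Adj u v ∧ G.dist root u + 1 = G.dist root v) := by
      intro v
      by_cases hv : v ∈ B.erase root
      · obtain ⟨u, h1, -, h3⟩ := exists_pred G (hBreach v (Finset.mem_of_mem_erase hv))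
          (Finset.ne_of_mem_erase hv)
        exact ⟨u, fun _ => ⟨h1, h3⟩⟩
      · exact ⟨root, fun hc => (hv hc).elim⟩
    choose pr hpr using hpred
    set g : Fin x → (Fin x → ℕ) := fun v => Pi.single (pr v) 1 + Pi.single v 1 with hgdef
    have hgM : ∀ v ∈ B.erase root, g v ∈ M := by
      intro v hv
      obtain ⟨hadj, -⟩ := hpr v hv
      have hgσ : g v ∈ σ := hadj.2
      have hgv : g v v ≠ 0 := by
        simp only [hgdef]
        rw [pair_apply, if_pos rfl, if_neg (Ne.symm hadj.1)]
        omega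
      refine Finset.mem_filter.mpr ⟨hgσ, ?_⟩
      rw [hfE _ hgσ v hgv]
      exact (Finset.mem_filter.mp (Finset.mem_of_mem_erase hv)).2
    have hginj : Set.InjOn g (B.erase root : Set (Fin x)) := by
      intro v hv v' hv' hgvv
      by_contra hne
      obtain ⟨hadj, hd⟩ := hpr v hv
      obtain ⟨hadj', hd'⟩ := hpr v' hv'
      have h1 : g v v' ≠ 0 := by
        rw [hgvv]
        simp only [hgdef]
        rw [pair_apply, if_pos rfl, if_neg (Ne.symm hadj'.1)]
        omega
      have h2 : g v' v ≠ 0 := by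
        rw [← hgvv]
        simp only [hgdef]
        rw [pair_apply, if_pos rfl, if_neg (Ne.symm hadj.1)]
        omega
      simp only [hgdef] at h1 h2
      rw [pair_apply] at h1 h2
      have e1 : v' = pr v := by
        by_cases hh : v' = pr v
        · exact hh
        · rw [if_neg hh, if_neg (fun hc => hne hc.symm)] at h1
          · omega
      have e2 : v = pr v' := by
        by_cases hh : v = pr v'
        · exact hh
        · rw [if_neg hh, if_neg hne] at h2
          omega
      rw [← e1] at hd
      rw [← e2] at hd'
      omega
    have hcardB : B.card ≤ M.card + 1 := by
      have := Finset.card_le_card_of_injOn g hgM hginj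
      rw [Finset.card_erase_of_mem hrootB] at this
      omega
    have hcase2 : B.card = 2 → 2 ≤ M.card := by
      intro hB2
      have herase : (B.erase root).card = 1 := by
        rw [Finset.card_erase_of_mem hrootB, hB2]
      obtain ⟨v, hv⟩ := Finset.card_eq_one.mp herase
      have hvB : v ∈ B.erase root := by
        rw [hv]
        exact Finset.mem_singleton_self v
      have hvroot : v ≠ root := Finset.ne_of_mem_erase hvB
      have hBeq : B = insert root {v} := by
        rw [← hv, Finset.insert_erase hrootB]
      obtain ⟨hadj, -⟩ := hpr v hvB
      have hprB : pr v ∈ B := by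
        refine Finset.mem_filter.mpr ⟨Finset.mem_univ _, ?_⟩
        have : π (pr v) = π v := SimpleGraph.ConnectedComponent.connectedComponentMk_eq_of_adj hadj
        rw [this]
        exact (Finset.mem_filter.mp (Finset.mem_of_mem_erase hvB)).2
      have hpr_root : pr v = root := by
        rw [hBeq] at hprB
        rcases Finset.mem_insert.mp hprB with h' | h'
        · exact h'
        · exact absurd (Finset.mem_singleton.mp h') hadj.1
      set p : Fin x → ℕ := Pi.single root 1 + Pi.single v 1 with hpdef
      have hpσ : p ∈ σ := by
        rw [hpdef, ← hpr_root]
        exact hadj.2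
      have hpv : p v ≠ 0 := by
        simp only [hpdef]
        rw [pair_apply, if_pos rfl, if_neg hvroot]
        omega
      have hpM : p ∈ M := by
        refine Finset.mem_filter.mpr ⟨hpσ, ?_⟩
        rw [hfE p hpσ v hpv]
        exact (Finset.mem_filter.mp (Finset.mem_of_mem_erase hvB)).2
      by_contra hM2
      push_neg at hM2
      have hMeq : M = {p} :=
        Finset.eq_singleton_iff_unique_mem.mpr
          ⟨hpM, fun b hb => Finset.card_le_one.mp (by omega) b hb p hpM⟩
      set B' : Set (Fin x) := {j | Relation.EqvGen (Touches σ) root j} with hB'def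
      apply hblocks B' ⟨root, rfl⟩
      have hB'mem : ∀ j, j ∈ B' ↔ (j = root ∨ j = v) := by
        intro j
        rw [hB'def]
        simp only [Set.mem_setOf_eq]
        rw [hER]
        constructor
        · intro hr
          have hj : j ∈ B := by
            refine Finset.mem_filter.mpr ⟨Finset.mem_univ _, ?_⟩
            rw [← hroot]
            exact (SimpleGraph.ConnectedComponent.sound hr).symm
          rw [hBeq] at hj
          rcases Finset.mem_insert.mp hj with h' | h'
          · exact Or.inl h'
          · exact Or.inr (Finset.mem_singleton.mp h')
        · rintro (rfl | rfl)
          · exact SimpleGraph.Reachable.refl _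
          · exact hBreach _ (Finset.mem_of_mem_erase hvB)
      refine ⟨root, v, Ne.symm hvroot, ?_, ?_⟩
      · ext j
        rw [hB'mem j]
        simp [Set.mem_insert_iff]
      · ext a
        simp only [Set.mem_setOf_eq, Set.mem_singleton_iff, Set.mem_sep_iff]
        constructor
        · rintro ⟨haσ, hsupp⟩
          have haσ' : a ∈ σ := haσ
          obtain ⟨i, hi⟩ := hσne a haσ'
          have hiB : i = root ∨ i = v := (hB'mem i).mp (hsupp i hi)
          have hπi : π i = q := by
            rcases hiB with rfl | rfl
            · exact hroot
            · exact (Finset.mem_filter.mp (Finset.mem_of_mem_erase hvB)).2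
          have haM : a ∈ M := Finset.mem_filter.mpr ⟨haσ', by rw [hfE a haσ' i hi, hπi]⟩
          rw [hMeq] at haM
          exact Finset.mem_singleton.mp haM
        · rintro rfl
          refine ⟨hpσ, ?_⟩
          intro k hk
          rw [pair_apply] at hk
          rw [hB'mem k]
          by_cases h1 : k = root
          · exact Or.inl h1
          · by_cases h2 : k = v
            · exact Or.inr h2
            · rw [if_neg h1, if_neg h2] at hk
              omega
    have hB1 : 1 ≤ B.card := Finset.card_pos.mpr ⟨root, hrootB⟩
    rcases Nat.lt_or_ge B.card 2 with hlt | hge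
    · omega
    · rcases Nat.eq_or_lt_of_le hge with heq | hgt
      · have := hcase2 heq.symm
        omega
      · omega
  have hfinal : 2 * x ≤ 3 * m := by
    calc 2 * x = 2 * (Finset.univ : Finset (Fin x)).card := by
          rw [Finset.card_univ, Fintype.card_fin]
      _ = ∑ q ∈ t, 2 * (Finset.univ.filter (fun i => π i = q)).card := by
          rw [hsum_x, Finset.mul_sum]
      _ ≤ ∑ q ∈ t, 3 * (σ.filter (fun a => fE a = q)).card := Finset.sum_le_sum key
      _ = 3 * σ.card := by rw [← Finset.mul_sum, ← hsum_m]
      _ = 3 * m := by rw [hσcard]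
  omega
end

section
/- For every m ≥ 0 and r ≥ 0, a_{m+r+1,r} = Σ_{x=0}^{r} Σ_{p=0}^{m} C(r, x) · C( C(r−x, 2), m−p ) · f_{p+x+1,x}, where C denotes the binomial coefficient. -/
namespace S12

open Finset

variable {r x : ℕ}

lemma zero_mem_mu : (0 : Fin r → ℕ) ∈ mu r := Finset.mem_insert_self _ _

lemma single_mem_mu (i : Fin r) : Pi.single i 1 ∈ mu r :=
  Finset.mem_insert_of_mem (Finset.mem_image_of_mem _ (Finset.mem_univ i))

lemma mem_mu {a : Fin r → ℕ} : a ∈ mu r ↔ a = 0 ∨ ∃ i, a = Pi.single i 1 := by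
  simp [mu, eq_comm]

lemma single_one_ne_zero (i : Fin r) : (Pi.single i 1 : Fin r → ℕ) ≠ 0 := by
  intro h
  simpa using congrFun h i

lemma single_injective' : Function.Injective (fun i : Fin r => Pi.single i (1:ℕ)) := by
  intro i j h
  by_contra hij
  have := congrFun h i
  simp [Pi.single_eq_same, Pi.single_eq_of_ne hij] at this

lemma card_mu : (mu r).card = r + 1 := by
  rw [mu, Finset.card_insert_of_notMem, Finset.card_image_of_injective _ single_injective']
  · simp [Nat.add_comm]
  · simp only [Finset.mem_image, Finset.mem_univ, true_and]
    rintro ⟨i, hi⟩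
    exact single_one_ne_zero i hi

/-- elements of a Ferrers diagram with n elements are coordinatewise < n -/
lemma coord_lt {F : Finset (Fin r → ℕ)} (hF : IsFerrers F) {n : ℕ} (hc : F.card = n)
    {a : Fin r → ℕ} (ha : a ∈ F) (i : Fin r) : a i < n := by
  have hsub : (Finset.range (a i + 1)).image (fun c => Pi.single i c) ⊆ F := by
    intro y hy
    simp only [Finset.mem_image, Finset.mem_range] at hy
    obtain ⟨c, hc', rfl⟩ := hy
    refine hF.2 a ha _ (fun j => ?_)
    rcases eq_or_ne j i with rfl | hj
    · simpa [Pi.single_eq_same] using Nat.lt_succ_iff.mp hc'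
    · simp [Pi.single_eq_of_ne hj]
  have hinj : Function.Injective (fun c : ℕ => (Pi.single i c : Fin r → ℕ)) := by
    intro c d h
    have := congrFun h i
    simpa [Pi.single_eq_same] using this
  have := Finset.card_le_card hsub
  rw [Finset.card_image_of_injective _ hinj, Finset.card_range, hc] at this
  omega

lemma finite_ferrers (r n : ℕ) : {F : Finset (Fin r → ℕ) | IsFerrers F ∧ F.card = n}.Finite := by
  have : {F : Finset (Fin r → ℕ) | IsFerrers F ∧ F.card = n} ⊆
      (((Fintype.piFinset (fun _ : Fin r => Finset.range n)).powerset : Finset (Finset (Fin r → ℕ))) : Set (Finset (Fin r → ℕ))) := by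
    intro F hF
    simp only [Finset.mem_coe, Finset.mem_powerset]
    intro a ha
    rw [Fintype.mem_piFinset]
    intro i
    simpa using coord_lt hF.1 hF.2 ha i
  exact (Finset.finite_toSet _).subset this


section Transfer

variable (S : Finset (Fin r)) (hS : S.card = x)

/-- restrict a point of `ℕ^r` supported in `S` to `ℕ^x` -/
def down (a : Fin r → ℕ) : Fin x → ℕ := fun k => a (S.orderIsoOfFin hS k)

/-- extend a point of `ℕ^x` to `ℕ^r`, supported in `S` -/
def up (b : Fin x → ℕ) : Fin r → ℕ := fun i =>
  if h : i ∈ S then b ((S.orderIsoOfFin hS).symm ⟨i, h⟩) else 0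

/-- `a` is supported in `S` -/
def SuppS (a : Fin r → ℕ) : Prop := ∀ i, a i ≠ 0 → i ∈ S

instance : DecidablePred (SuppS S) := fun a =>
  decidable_of_iff (∀ i, a i ≠ 0 → i ∈ S) Iff.rfl

variable {S hS}

lemma up_apply_mem (b : Fin x → ℕ) {i : Fin r} (h : i ∈ S) :
    up S hS b i = b ((S.orderIsoOfFin hS).symm ⟨i, h⟩) := dif_pos h

lemma up_apply_not_mem (b : Fin x → ℕ) {i : Fin r} (h : i ∉ S) :
    up S hS b i = 0 := dif_neg h

lemma up_apply_iso (b : Fin x → ℕ) (k : Fin x) :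
    up S hS b ((S.orderIsoOfFin hS k : Fin r)) = b k := by
  rw [up_apply_mem b (S.orderIsoOfFin hS k).2]
  congr 1
  rw [← Subtype.coe_eta (S.orderIsoOfFin hS k) (S.orderIsoOfFin hS k).2]
  exact OrderIso.symm_apply_apply _ _

lemma down_up (b : Fin x → ℕ) : down S hS (up S hS b) = b := by
  funext k
  exact up_apply_iso b k

lemma suppS_up (b : Fin x → ℕ) : SuppS S (up S hS b) := by
  intro i hi
  by_contra h
  exact hi (up_apply_not_mem b h)

lemma up_down {a : Fin r → ℕ} (ha : SuppS S a) : up S hS (down S hS a) = a := by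
  funext i
  by_cases h : i ∈ S
  · rw [up_apply_mem _ h]
    show a _ = a i
    congr 1
    exact congrArg Subtype.val (OrderIso.apply_symm_apply (S.orderIsoOfFin hS) ⟨i, h⟩)
  · rw [up_apply_not_mem _ h]
    by_contra h'
    exact h (ha i (Ne.symm h'))

lemma up_injective : Function.Injective (up S hS) :=
  Function.LeftInverse.injective down_up

lemma down_injOn_suppS {a a' : Fin r → ℕ} (ha : SuppS S a) (ha' : SuppS S a')
    (h : down S hS a = down S hS a') : a = a' := by
  rw [← up_down ha, ← up_down ha', h]

lemma down_mono {a a' : Fin r → ℕ} (h : ∀ i, a i ≤ a' i) (k : Fin x) :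
    down S hS a k ≤ down S hS a' k := h _

lemma up_mono {b b' : Fin x → ℕ} (h : ∀ k, b k ≤ b' k) (i : Fin r) :
    up S hS b i ≤ up S hS b' i := by
  by_cases hi : i ∈ S
  · rw [up_apply_mem _ hi, up_apply_mem _ hi]; exact h _
  · rw [up_apply_not_mem _ hi, up_apply_not_mem _ hi]

lemma up_zero : up S hS 0 = 0 := by
  funext i
  by_cases hi : i ∈ S
  · rw [up_apply_mem _ hi]; rfl
  · rw [up_apply_not_mem _ hi]; rfl

lemma down_zero : down S hS 0 = 0 := rfl

lemma up_single (k : Fin x) (c : ℕ) :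
    up S hS (Pi.single k c) = Pi.single ((S.orderIsoOfFin hS k : Fin r)) c := by
  funext i
  by_cases hi : i ∈ S
  · rw [up_apply_mem _ hi]
    have hiff : (S.orderIsoOfFin hS).symm ⟨i, hi⟩ = k ↔ i = (S.orderIsoOfFin hS k : Fin r) := by
      rw [OrderIso.symm_apply_eq]
      exact ⟨fun h => congrArg Subtype.val h, fun h => Subtype.ext h⟩
    rcases eq_or_ne ((S.orderIsoOfFin hS).symm ⟨i, hi⟩) k with h | h
    · rw [h, Pi.single_eq_same, hiff.mp h, Pi.single_eq_same]
    · rw [Pi.single_eq_of_ne h, Pi.single_eq_of_ne (fun hh => h (hiff.mpr hh))]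
  · rw [up_apply_not_mem _ hi]
    have hne : i ≠ ((S.orderIsoOfFin hS k : Fin r)) := by
      intro hh
      rw [hh] at hi
      exact hi (S.orderIsoOfFin hS k).2
    rw [Pi.single_eq_of_ne hne]

lemma down_single (k : Fin x) (c : ℕ) :
    down S hS (Pi.single ((S.orderIsoOfFin hS k : Fin r)) c) = Pi.single k c := by
  rw [← up_single, down_up]

lemma down_single' {i : Fin r} (hi : i ∈ S) (c : ℕ) :
    down S hS (Pi.single i c) = Pi.single ((S.orderIsoOfFin hS).symm ⟨i, hi⟩) c := by
  have : i = ((S.orderIsoOfFin hS ((S.orderIsoOfFin hS).symm ⟨i, hi⟩) : Fin r)) := by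
    rw [OrderIso.apply_symm_apply]
  conv_lhs => rw [this]
  exact down_single _ c

lemma suppS_zero : SuppS S (0 : Fin r → ℕ) := fun i hi => absurd rfl hi

lemma suppS_single {i : Fin r} (hi : i ∈ S) : SuppS S (Pi.single i 1 : Fin r → ℕ) := by
  intro j hj
  rcases eq_or_ne j i with rfl | h
  · exact hi
  · exact absurd (Pi.single_eq_of_ne h 1) hj

lemma suppS_of_le {a y : Fin r → ℕ} (h : ∀ i, y i ≤ a i) (ha : SuppS S a) : SuppS S y :=
  fun i hi => ha i (fun h0 => hi (Nat.le_antisymm (h0 ▸ h i) (Nat.zero_le _)))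

lemma up_add (b b' : Fin x → ℕ) : up S hS (b + b') = up S hS b + up S hS b' := by
  funext i
  by_cases hi : i ∈ S
  · simp only [Pi.add_apply, up_apply_mem _ hi]
  · simp only [Pi.add_apply, up_apply_not_mem _ hi]

lemma down_add (a a' : Fin r → ℕ) : down S hS (a + a') = down S hS a + down S hS a' := rfl

lemma iso_coe_injective : Function.Injective (fun k : Fin x => (S.orderIsoOfFin hS k : Fin r)) :=
  fun k l h => (S.orderIsoOfFin hS).injective (Subtype.ext h)

lemma isType1_up {b : Fin x → ℕ} : IsType1 (up S hS b) ↔ IsType1 b := by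
  constructor
  · rintro ⟨u, v, huv, h⟩
    have hu : u ∈ S := by
      have : up S hS b u ≠ 0 := by
        rw [h]; simp [Pi.single_eq_same, Pi.single_eq_of_ne]
      exact suppS_up b u this
    have hv : v ∈ S := by
      have : up S hS b v ≠ 0 := by
        rw [h]; simp [Pi.single_eq_same, Pi.single_eq_of_ne huv]
      exact suppS_up b v this
    refine ⟨(S.orderIsoOfFin hS).symm ⟨u, hu⟩, (S.orderIsoOfFin hS).symm ⟨v, hv⟩, ?_, ?_⟩
    · intro hh
      exact huv (congrArg Subtype.val ((S.orderIsoOfFin hS).symm.injective.eq_iff.mp hh))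
    · have := congrArg (down S hS) h
      rw [down_up, down_add, down_single' hu, down_single' hv] at this
      exact this
  · rintro ⟨u, v, huv, rfl⟩
    refine ⟨(S.orderIsoOfFin hS u : Fin r), (S.orderIsoOfFin hS v : Fin r), ?_, ?_⟩
    · exact fun hh => huv (iso_coe_injective hh)
    · rw [up_add, up_single, up_single]

end Transfer

/-- the indicator point of a finite set of coordinates -/
def indic (t : Finset (Fin r)) : Fin r → ℕ := fun i => if i ∈ t then 1 else 0

/-- the support of a point, as a Finset -/
def fsupp (a : Fin r → ℕ) : Finset (Fin r) := Finset.univ.filter (fun i => a i ≠ 0)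

lemma mem_fsupp {a : Fin r → ℕ} {i : Fin r} : i ∈ fsupp a ↔ a i ≠ 0 := by
  simp [fsupp]

lemma fsupp_indic (t : Finset (Fin r)) : fsupp (indic t) = t := by
  ext i
  by_cases h : i ∈ t <;> simp [mem_fsupp, indic, h]

lemma indic_pair {i j : Fin r} (hij : i ≠ j) :
    indic {i, j} = Pi.single i 1 + Pi.single j 1 := by
  funext u
  rcases eq_or_ne u i with rfl | hui
  · simp [indic, Pi.single_eq_same, Pi.single_eq_of_ne hij]
  · rcases eq_or_ne u j with rfl | huj
    · simp [indic, Pi.single_eq_same, Pi.single_eq_of_ne hij, Pi.single_eq_of_ne hui]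
    · simp [indic, hui, huj, Pi.single_eq_of_ne hui, Pi.single_eq_of_ne huj]

lemma isType1_iff_indic {a : Fin r → ℕ} :
    IsType1 a ↔ ∃ t : Finset (Fin r), t.card = 2 ∧ a = indic t := by
  constructor
  · rintro ⟨i, j, hij, rfl⟩
    exact ⟨{i, j}, Finset.card_pair hij, (indic_pair hij).symm⟩
  · rintro ⟨t, ht, rfl⟩
    obtain ⟨i, j, hij, rfl⟩ := Finset.card_eq_two.mp ht
    exact ⟨i, j, hij, indic_pair hij⟩

lemma indic_eq_self_of_type1 {a : Fin r → ℕ} (h : IsType1 a) : indic (fsupp a) = a := by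
  obtain ⟨t, ht, rfl⟩ := isType1_iff_indic.mp h
  rw [fsupp_indic]

lemma card_fsupp_of_type1 {a : Fin r → ℕ} (h : IsType1 a) : (fsupp a).card = 2 := by
  obtain ⟨t, ht, rfl⟩ := isType1_iff_indic.mp h
  rw [fsupp_indic, ht]
section Eqv

lemma eqvgen_mono {σ τ : Finset (Fin r → ℕ)} (h : σ ⊆ τ) {i j : Fin r}
    (he : Relation.EqvGen (Touches σ) i j) : Relation.EqvGen (Touches τ) i j := by
  refine Relation.EqvGen.mono ?_ _ _ he
  rintro u v ⟨a, ha, h1, h2⟩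
  exact ⟨a, h ha, h1, h2⟩

/-- If every element of `σ` touching `S` lies in `τ` and has support in `S`,
then `EqvGen (Touches σ)` restricted to `S` is contained in `EqvGen (Touches τ)`,
and `EqvGen (Touches σ)`-classes don't cross `S`. -/
lemma eqvgen_restrict {σ τ : Finset (Fin r → ℕ)} {S : Finset (Fin r)}
    (H : ∀ a ∈ σ, ∀ i, a i ≠ 0 → i ∈ S → (a ∈ τ ∧ ∀ j, a j ≠ 0 → j ∈ S))
    {i j : Fin r} (h : Relation.EqvGen (Touches σ) i j) :
    i = j ∨ ((i ∈ S ↔ j ∈ S) ∧ (i ∈ S → Relation.EqvGen (Touches τ) i j)) := by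
  induction h with
  | rel u v huv =>
    right
    obtain ⟨a, ha, hu, hv⟩ := huv
    refine ⟨⟨fun hu' => (H a ha u hu hu').2 v hv, fun hv' => (H a ha v hv hv').2 u hu⟩, ?_⟩
    intro hu'
    exact Relation.EqvGen.rel _ _ ⟨a, (H a ha u hu hu').1, hu, hv⟩
  | refl u => exact Or.inl rfl
  | symm u v _ ih =>
    rcases ih with rfl | ⟨hiff, himp⟩
    · exact Or.inl rfl
    · exact Or.inr ⟨hiff.symm, fun hv => Relation.EqvGen.symm _ _ (himp (hiff.mpr hv))⟩
  | trans u v w _ _ ih1 ih2 =>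
    rcases ih1 with rfl | ⟨hiff1, himp1⟩
    · exact ih2
    · rcases ih2 with rfl | ⟨hiff2, himp2⟩
      · exact Or.inr ⟨hiff1, himp1⟩
      · exact Or.inr ⟨hiff1.trans hiff2,
          fun hu => Relation.EqvGen.trans _ _ _ (himp1 hu) (himp2 (hiff1.mp hu))⟩

variable {S : Finset (Fin r)} {hS : S.card = x}

lemma eqvgen_image_up {σ₀ : Finset (Fin x → ℕ)} {k l : Fin x} :
    Relation.EqvGen (Touches (σ₀.image (up S hS)))
      ((S.orderIsoOfFin hS k : Fin r)) ((S.orderIsoOfFin hS l : Fin r)) ↔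
    Relation.EqvGen (Touches σ₀) k l := by
  constructor
  · intro h
    have key : ∀ u v : Fin r, Relation.EqvGen (Touches (σ₀.image (up S hS))) u v →
        u = v ∨ ∃ (hu : u ∈ S) (hv : v ∈ S), Relation.EqvGen (Touches σ₀)
          ((S.orderIsoOfFin hS).symm ⟨u, hu⟩) ((S.orderIsoOfFin hS).symm ⟨v, hv⟩) := by
      intro u v huv
      induction huv with
      | rel u v huv =>
        obtain ⟨a, ha, h1, h2⟩ := huv
        obtain ⟨b, hb, rfl⟩ := Finset.mem_image.mp ha
        have hu : u ∈ S := suppS_up b u h1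
        have hv : v ∈ S := suppS_up b v h2
        right
        refine ⟨hu, hv, Relation.EqvGen.rel _ _ ⟨b, hb, ?_, ?_⟩⟩
        · rw [← up_apply_mem b hu]; exact h1
        · rw [← up_apply_mem b hv]; exact h2
      | refl u => exact Or.inl rfl
      | symm u v _ ih =>
        rcases ih with rfl | ⟨hu, hv, h⟩
        · exact Or.inl rfl
        · exact Or.inr ⟨hv, hu, Relation.EqvGen.symm _ _ h⟩
      | trans u v w _ _ ih1 ih2 =>
        rcases ih1 with rfl | ⟨hu, hv, h1⟩
        · exact ih2
        · rcases ih2 with rfl | ⟨hv', hw, h2⟩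
          · exact Or.inr ⟨hu, hv, h1⟩
          · exact Or.inr ⟨hu, hw, Relation.EqvGen.trans _ _ _ h1 h2⟩
    rcases key _ _ h with heq | ⟨hu, hv, h'⟩
    · rw [iso_coe_injective heq]
      exact Relation.EqvGen.refl _
    · have e1 : (⟨(S.orderIsoOfFin hS k : Fin r), hu⟩ : S) = S.orderIsoOfFin hS k :=
        Subtype.ext rfl
      have e2 : (⟨(S.orderIsoOfFin hS l : Fin r), hv⟩ : S) = S.orderIsoOfFin hS l :=
        Subtype.ext rfl
      rwa [e1, e2, OrderIso.symm_apply_apply, OrderIso.symm_apply_apply] at h'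
  · intro h
    induction h with
    | rel k l hkl =>
      obtain ⟨b, hb, h1, h2⟩ := hkl
      refine Relation.EqvGen.rel _ _ ⟨up S hS b, Finset.mem_image_of_mem _ hb, ?_, ?_⟩
      · rwa [up_apply_iso]
      · rwa [up_apply_iso]
    | refl k => exact Relation.EqvGen.refl _
    | symm _ _ _ ih => exact Relation.EqvGen.symm _ _ ih
    | trans _ _ _ _ _ ih1 ih2 => exact Relation.EqvGen.trans _ _ _ ih1 ih2

end Eqv
section Core

/-- `i` is a core coordinate for skew diagram `σ` -/
def CoreP (σ : Finset (Fin r → ℕ)) (i : Fin r) : Prop :=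
  ∃ a ∈ σ, ¬ IsType1 a ∧ ∃ j, a j ≠ 0 ∧ Relation.EqvGen (Touches σ) i j

open Classical in
/-- the set of core coordinates -/
noncomputable def coreSet (σ : Finset (Fin r → ℕ)) : Finset (Fin r) :=
  Finset.univ.filter (fun i => CoreP σ i)

lemma mem_coreSet {σ : Finset (Fin r → ℕ)} {i : Fin r} : i ∈ coreSet σ ↔ CoreP σ i := by
  simp [coreSet]

lemma CoreP.of_eqvgen {σ : Finset (Fin r → ℕ)} {i i' : Fin r}
    (h : CoreP σ i) (he : Relation.EqvGen (Touches σ) i' i) : CoreP σ i' := by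
  obtain ⟨a, ha, ht, j, hj, hij⟩ := h
  exact ⟨a, ha, ht, j, hj, Relation.EqvGen.trans _ _ _ he hij⟩

/-- every element of `σ` has support inside the core, or is a type-1 point
with support disjoint from the core -/
lemma supp_split {σ : Finset (Fin r → ℕ)} {a : Fin r → ℕ} (ha : a ∈ σ) :
    (∀ i, a i ≠ 0 → i ∈ coreSet σ) ∨ (IsType1 a ∧ ∀ i, a i ≠ 0 → i ∉ coreSet σ) := by
  by_cases ht : IsType1 a
  · by_cases hc : ∃ i, a i ≠ 0 ∧ i ∈ coreSet σ
    · obtain ⟨i0, hi0, hc0⟩ := hc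
      left
      intro i hi
      have : Relation.EqvGen (Touches σ) i i0 := Relation.EqvGen.rel _ _ ⟨a, ha, hi, hi0⟩
      exact mem_coreSet.mpr ((mem_coreSet.mp hc0).of_eqvgen this)
    · right
      exact ⟨ht, fun i hi hmem => hc ⟨i, hi, hmem⟩⟩
  · left
    intro i hi
    exact mem_coreSet.mpr ⟨a, ha, ht, i, hi, Relation.EqvGen.refl i⟩

end Core

section DownF

variable {S : Finset (Fin r)} {hS : S.card = x} {F : Finset (Fin r → ℕ)}

lemma down_mem_mu_iff {a : Fin r → ℕ} (ha : SuppS S a) :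
    down S hS a ∈ mu x ↔ a ∈ mu r := by
  constructor
  · intro h
    rcases mem_mu.mp h with h0 | ⟨k, hk⟩
    · have : a = 0 := by
        rw [← up_down (hS := hS) ha, h0, up_zero]
      rw [this]; exact zero_mem_mu
    · have : a = Pi.single ((S.orderIsoOfFin hS k : Fin r)) 1 := by
        rw [← up_down (hS := hS) ha, hk, up_single]
      rw [this]; exact single_mem_mu _
  · intro h
    rcases mem_mu.mp h with rfl | ⟨i, rfl⟩
    · rw [down_zero]; exact zero_mem_mu
    · have hi : i ∈ S := by
        refine ha i ?_
        rw [Pi.single_eq_same]; exact one_ne_zero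
      rw [down_single' hi]
      exact single_mem_mu _

lemma ferrers_down (hFer : IsFerrers F) (hmu : mu r ⊆ F) :
    IsFerrers ((F.filter (SuppS S)).image (down S hS)) := by
  constructor
  · refine ⟨down S hS 0, Finset.mem_image_of_mem _ ?_⟩
    exact Finset.mem_filter.mpr ⟨hmu zero_mem_mu, suppS_zero⟩
  · intro b hb y hy
    obtain ⟨a, ha, rfl⟩ := Finset.mem_image.mp hb
    obtain ⟨haF, haS⟩ := Finset.mem_filter.mp ha
    have hup : ∀ i, up S hS y i ≤ a i := by
      intro i
      have := up_mono (S := S) (hS := hS) hy i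
      rwa [up_down haS] at this
    have hyF : up S hS y ∈ F := hFer.2 a haF _ hup
    have : y = down S hS (up S hS y) := (down_up y).symm
    rw [this]
    exact Finset.mem_image_of_mem _ (Finset.mem_filter.mpr ⟨hyF, suppS_up _⟩)

lemma mu_subset_down (hmu : mu r ⊆ F) :
    mu x ⊆ (F.filter (SuppS S)).image (down S hS) := by
  intro b hb
  rcases mem_mu.mp hb with rfl | ⟨k, rfl⟩
  · exact Finset.mem_image_of_mem _
      (Finset.mem_filter.mpr ⟨hmu zero_mem_mu, suppS_zero⟩)
  · have : Pi.single k 1 = down S hS (Pi.single ((S.orderIsoOfFin hS k : Fin r)) 1) :=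
      (down_single k 1).symm
    rw [this]
    refine Finset.mem_image_of_mem _ (Finset.mem_filter.mpr ⟨hmu (single_mem_mu _), ?_⟩)
    exact suppS_single (S.orderIsoOfFin hS k).2

lemma mu_filter_suppS : (mu r).filter (SuppS S) = insert 0 (S.image (fun i => Pi.single i 1)) := by
  ext a
  simp only [Finset.mem_filter, Finset.mem_insert, Finset.mem_image]
  constructor
  · rintro ⟨hmem, hsupp⟩
    rcases mem_mu.mp hmem with rfl | ⟨i, rfl⟩
    · exact Or.inl rfl
    · refine Or.inr ⟨i, hsupp i ?_, rfl⟩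
      rw [Pi.single_eq_same]; exact one_ne_zero
  · rintro (rfl | ⟨i, hi, rfl⟩)
    · exact ⟨zero_mem_mu, suppS_zero⟩
    · exact ⟨single_mem_mu i, suppS_single hi⟩

lemma card_mu_filter_suppS (hS : S.card = x) : ((mu r).filter (SuppS S)).card = x + 1 := by
  rw [mu_filter_suppS, Finset.card_insert_of_notMem, Finset.card_image_of_injective _ single_injective']
  · rw [hS, Nat.add_comm]
  · simp only [Finset.mem_image]
    rintro ⟨i, _, hi⟩
    exact single_one_ne_zero i hi

/-- F splits as `μ ⊔ σ`; the S-supported part splits accordingly -/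
lemma filter_suppS_eq (hmu : mu r ⊆ F) :
    F.filter (SuppS S) = (mu r).filter (SuppS S) ∪ (F \ mu r).filter (SuppS S) := by
  rw [← Finset.filter_union, Finset.union_sdiff_of_subset hmu]

lemma skew_down (hmu : mu r ⊆ F) :
    ((F.filter (SuppS S)).image (down S hS)) \ mu x =
      ((F \ mu r).filter (SuppS S)).image (down S hS) := by
  ext b
  simp only [Finset.mem_sdiff, Finset.mem_image, Finset.mem_filter]
  constructor
  · rintro ⟨⟨a, ⟨haF, haS⟩, rfl⟩, hnmu⟩
    refine ⟨a, ⟨⟨haF, fun hmem => hnmu ((down_mem_mu_iff haS).mpr hmem)⟩, haS⟩, rfl⟩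
  · rintro ⟨a, ⟨haF, haS⟩, rfl⟩
    obtain ⟨haF', hanmu⟩ := haF
    exact ⟨⟨a, ⟨haF', haS⟩, rfl⟩, fun hmem => hanmu ((down_mem_mu_iff haS).mp hmem)⟩

lemma card_down_filter (G : Finset (Fin r → ℕ)) (hG : ∀ a ∈ G, SuppS S a) :
    (G.image (down S hS)).card = G.card := by
  refine Finset.card_image_of_injOn ?_
  intro a ha a' ha' h
  exact down_injOn_suppS (hG a ha) (hG a' ha') h

lemma image_up_image_down (G : Finset (Fin r → ℕ)) (hG : ∀ a ∈ G, SuppS S a) :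
    (G.image (down S hS)).image (up S hS) = G := by
  rw [Finset.image_image]
  have : ∀ a ∈ G, (up S hS ∘ down S hS) a = id a := by
    intro a ha
    exact up_down (hG a ha)
  rw [Finset.image_congr this, Finset.image_id]

end DownF
section Forward

variable {S : Finset (Fin r)} {hS : S.card = x} {F : Finset (Fin r → ℕ)}

/-- Hypothesis for `eqvgen_restrict` when `S` is the core set. -/
lemma H_core (hcore : S = coreSet (F \ mu r)) :
    ∀ a ∈ F \ mu r, ∀ i, a i ≠ 0 → i ∈ S →
      (a ∈ (F \ mu r).filter (SuppS S) ∧ ∀ j, a j ≠ 0 → j ∈ S) := by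
  intro a ha i hi hiS
  rcases supp_split ha with h | ⟨_, h⟩
  · have hsupp : SuppS S a := by
      intro j hj
      rw [hcore]; exact h j hj
    exact ⟨Finset.mem_filter.mpr ⟨ha, hsupp⟩, hsupp⟩
  · exact absurd hiS (by rw [hcore]; exact h i hi)

lemma edge_split (hcore : S = coreSet (F \ mu r)) {a : Fin r → ℕ}
    (ha : a ∈ F \ mu r) (hns : ¬ SuppS S a) :
    IsType1 a ∧ ∀ i, a i ≠ 0 → i ∉ S := by
  rcases supp_split ha with h | ⟨ht, h⟩
  · exact absurd (fun i hi => by rw [hcore]; exact h i hi) hns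
  · exact ⟨ht, fun i hi => by rw [hcore]; exact h i hi⟩

lemma skew_filter_eq (hmu : mu r ⊆ F) :
    (F.filter (SuppS S)) \ mu r = (F \ mu r).filter (SuppS S) := by
  ext a
  simp only [Finset.mem_sdiff, Finset.mem_filter]
  tauto

/-- the forward `F'` has the Fmat block property -/
lemma fmat_cond_forward (hS : S.card = x) (hmu : mu r ⊆ F)
    (hcore : S = coreSet (F \ mu r)) :
    ∀ B : Set (Fin x), IsBlock (((F.filter (SuppS S)).image (down S hS)) \ mu x) B →
      ∃ a ∈ ((F.filter (SuppS S)).image (down S hS)) \ mu x,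
        SuppIn a B ∧ ¬ IsType1 a := by
  set σF := F \ mu r with hσF
  set σS := σF.filter (SuppS S) with hσS
  have hσ' : ((F.filter (SuppS S)).image (down S hS)) \ mu x = σS.image (down S hS) :=
    skew_down hmu
  have hsuppσS : ∀ a ∈ σS, SuppS S a := fun a ha => (Finset.mem_filter.mp ha).2
  have himup : (σS.image (down S hS)).image (up S hS) = σS := image_up_image_down σS hsuppσS
  rintro B ⟨k0, rfl⟩
  have hi0 : (S.orderIsoOfFin hS k0 : Fin r) ∈ coreSet σF := by
    rw [← hcore]; exact (S.orderIsoOfFin hS k0).2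
  obtain ⟨a, haσ, ht, j, hj, hEq⟩ := mem_coreSet.mp hi0
  have haS : SuppS S a := by
    rcases supp_split haσ with h | ⟨ht', _⟩
    · intro i hi; rw [hcore]; exact h i hi
    · exact absurd ht' ht
  have haσS : a ∈ σS := Finset.mem_filter.mpr ⟨haσ, haS⟩
  refine ⟨down S hS a, ?_, ?_, ?_⟩
  · rw [hσ']; exact Finset.mem_image_of_mem _ haσS
  · -- SuppIn
    intro l hl
    have hal : a ((S.orderIsoOfFin hS l : Fin r)) ≠ 0 := hl
    show Relation.EqvGen _ k0 l
    have h1 : Relation.EqvGen (Touches σF) ((S.orderIsoOfFin hS k0 : Fin r))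
        ((S.orderIsoOfFin hS l : Fin r)) := by
      refine Relation.EqvGen.trans _ _ _ hEq ?_
      exact Relation.EqvGen.symm _ _ (Relation.EqvGen.rel _ _ ⟨a, haσ, hal, hj⟩)
    rcases eqvgen_restrict (H_core hcore) h1 with heq | ⟨_, himp⟩
    · rw [iso_coe_injective heq]
      exact Relation.EqvGen.refl _
    · have h2 := himp (S.orderIsoOfFin hS k0).2
      have h3 : Relation.EqvGen (Touches ((σS.image (down S hS)).image (up S hS)))
          ((S.orderIsoOfFin hS k0 : Fin r)) ((S.orderIsoOfFin hS l : Fin r)) := by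
        rwa [himup]
      have := eqvgen_image_up.mp h3
      rw [← hσ'] at this
      exact this
  · -- not type 1
    intro htyp
    have : IsType1 (up S hS (down S hS a)) := isType1_up.mpr htyp
    rw [up_down haS] at this
    exact ht this

/-- card of the forward `F'` -/
lemma card_forward (hS : S.card = x) (hmu : mu r ⊆ F) :
    ((F.filter (SuppS S)).image (down S hS)).card =
      ((F \ mu r).filter (SuppS S)).card + x + 1 := by
  rw [card_down_filter _ (fun a ha => (Finset.mem_filter.mp ha).2), filter_suppS_eq hmu,
    Finset.card_union_of_disjoint, card_mu_filter_suppS hS]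
  · ring
  · refine Finset.disjoint_filter_filter ?_
    exact Finset.disjoint_sdiff

/-- edge sets: supports of the non-core elements -/
lemma edge_mem (hcore : S = coreSet (F \ mu r)) {a : Fin r → ℕ}
    (ha : a ∈ (F \ mu r) \ (F \ mu r).filter (SuppS S)) :
    fsupp a ∈ (Sᶜ).powersetCard 2 ∧ IsType1 a := by
  obtain ⟨haσ, hnot⟩ := Finset.mem_sdiff.mp ha
  have hns : ¬ SuppS S a := fun h => hnot (Finset.mem_filter.mpr ⟨haσ, h⟩)
  obtain ⟨ht, hdisj⟩ := edge_split hcore haσ hns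
  refine ⟨Finset.mem_powersetCard.mpr ⟨?_, card_fsupp_of_type1 ht⟩, ht⟩
  intro i hi
  exact Finset.mem_compl.mpr (hdisj i (mem_fsupp.mp hi))

lemma card_edges (hcore : S = coreSet (F \ mu r)) :
    (((F \ mu r) \ (F \ mu r).filter (SuppS S)).image fsupp).card =
      ((F \ mu r) \ (F \ mu r).filter (SuppS S)).card := by
  refine Finset.card_image_of_injOn ?_
  intro a ha a' ha' h
  have h1 := (edge_mem hcore ha).2
  have h2 := (edge_mem hcore ha').2
  rw [← indic_eq_self_of_type1 h1, ← indic_eq_self_of_type1 h2, h]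

lemma indic_image_edges (hcore : S = coreSet (F \ mu r)) :
    ((((F \ mu r) \ (F \ mu r).filter (SuppS S)).image fsupp).image indic) =
      (F \ mu r) \ (F \ mu r).filter (SuppS S) := by
  rw [Finset.image_image]
  have : ∀ a ∈ (F \ mu r) \ (F \ mu r).filter (SuppS S), (indic ∘ fsupp) a = id a := by
    intro a ha
    exact indic_eq_self_of_type1 (edge_mem hcore ha).2
  rw [Finset.image_congr this, Finset.image_id]

end Forward
section Helpers

lemma le_zero_eq' {y : Fin r → ℕ} (h : ∀ i, y i ≤ (0 : Fin r → ℕ) i) : y = 0 := by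
  funext i
  exact Nat.le_zero.mp (h i)

lemma le_single_cases {y : Fin r → ℕ} {i : Fin r} (h : ∀ j, y j ≤ (Pi.single i 1 : Fin r → ℕ) j) :
    y = 0 ∨ y = Pi.single i 1 := by
  by_cases hy : y i = 0
  · left
    funext j
    rcases eq_or_ne j i with rfl | hj
    · exact hy
    · have := h j
      rw [Pi.single_eq_of_ne hj] at this
      exact Nat.le_zero.mp this
  · right
    funext j
    rcases eq_or_ne j i with rfl | hj
    · have := h j
      rw [Pi.single_eq_same] at this ⊢
      omega
    · have := h j
      rw [Pi.single_eq_of_ne hj] at this ⊢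
      exact Nat.le_zero.mp this

lemma indic_empty : indic (∅ : Finset (Fin r)) = 0 := by
  funext i; simp [indic]

lemma indic_singleton (i : Fin r) : indic ({i} : Finset (Fin r)) = Pi.single i 1 := by
  funext j
  rcases eq_or_ne j i with rfl | hj
  · simp [indic, Pi.single_eq_same]
  · simp [indic, hj, Pi.single_eq_of_ne hj]

lemma le_indic_eq {y : Fin r → ℕ} {t : Finset (Fin r)} (h : ∀ i, y i ≤ indic t i) :
    y = indic (fsupp y) ∧ fsupp y ⊆ t := by
  constructor
  · funext i
    by_cases hi : y i = 0
    · simp [indic, mem_fsupp, hi]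
    · have := h i
      simp only [indic] at this ⊢
      rw [if_pos (mem_fsupp.mpr hi)]
      by_cases hit : i ∈ t
      · rw [if_pos hit] at this; omega
      · rw [if_neg hit] at this; omega
  · intro i hi
    have := h i
    simp only [indic] at this
    by_cases hit : i ∈ t
    · exact hit
    · rw [if_neg hit] at this
      exact absurd (Nat.le_zero.mp this) (mem_fsupp.mp hi)

lemma fsupp_card_mu {a : Fin r → ℕ} (h : a ∈ mu r) : (fsupp a).card ≤ 1 := by
  rcases mem_mu.mp h with rfl | ⟨i, rfl⟩
  · have : fsupp (0 : Fin r → ℕ) = ∅ := by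
      ext j; simp [mem_fsupp]
    rw [this]; simp
  · have : fsupp (Pi.single i 1 : Fin r → ℕ) = {i} := by
      ext j
      rcases eq_or_ne j i with rfl | hj
      · simp [mem_fsupp, Pi.single_eq_same]
      · simp [mem_fsupp, Pi.single_eq_of_ne hj, hj]
    rw [this]; simp

lemma indic_not_mem_mu {t : Finset (Fin r)} (ht : t.card = 2) : indic t ∉ mu r := by
  intro h
  have := fsupp_card_mu h
  rw [fsupp_indic, ht] at this
  omega

lemma exists_ne_zero_of_not_mem_mu {a : Fin r → ℕ} (h : a ∉ mu r) : ∃ i, a i ≠ 0 := by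
  by_contra hc
  push_neg at hc
  exact h (mem_mu.mpr (Or.inl (funext hc)))

end Helpers
section Backward

variable (S : Finset (Fin r)) (hS : S.card = x) (E : Finset (Finset (Fin r)))
  (F' : Finset (Fin x → ℕ))

/-- reconstruction of `F` from core data and edge data -/
def recon : Finset (Fin r → ℕ) :=
  mu r ∪ ((F' \ mu x).image (up S hS) ∪ E.image indic)

variable {S hS E F'}

lemma up_mem_mu_iff {b : Fin x → ℕ} : up S hS b ∈ mu r ↔ b ∈ mu x := by
  rw [← down_mem_mu_iff (hS := hS) (suppS_up b), down_up]

lemma mu_subset_recon : mu r ⊆ recon S hS E F' := Finset.subset_union_left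

section WithHyp

lemma edge_prop (hE : E ⊆ (Sᶜ).powersetCard 2) {t : Finset (Fin r)} (ht : t ∈ E) : t ⊆ Sᶜ ∧ t.card = 2 :=
  Finset.mem_powersetCard.mp (hE ht)

lemma indicE_not_mem_mu (hE : E ⊆ (Sᶜ).powersetCard 2) {a : Fin r → ℕ} (ha : a ∈ E.image indic) : a ∉ mu r := by
  obtain ⟨t, ht, rfl⟩ := Finset.mem_image.mp ha
  exact indic_not_mem_mu (edge_prop hE ht).2

lemma indicE_type1 (hE : E ⊆ (Sᶜ).powersetCard 2) {a : Fin r → ℕ} (ha : a ∈ E.image indic) : IsType1 a := by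
  obtain ⟨t, ht, rfl⟩ := Finset.mem_image.mp ha
  exact isType1_iff_indic.mpr ⟨t, (edge_prop hE ht).2, rfl⟩

lemma indicE_not_suppS (hE : E ⊆ (Sᶜ).powersetCard 2) {a : Fin r → ℕ} (ha : a ∈ E.image indic) : ¬ SuppS S a := by
  obtain ⟨t, ht, rfl⟩ := Finset.mem_image.mp ha
  obtain ⟨hsub, hcard⟩ := edge_prop hE ht
  obtain ⟨i, hi⟩ := Finset.card_pos.mp (by omega : 0 < t.card)
  intro h
  have : indic t i ≠ 0 := by simp [indic, hi]
  exact Finset.mem_compl.mp (hsub hi) (h i this)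

lemma upskew_not_mem_mu {a : Fin r → ℕ} (ha : a ∈ (F' \ mu x).image (up S hS)) :
    a ∉ mu r := by
  obtain ⟨b, hb, rfl⟩ := Finset.mem_image.mp ha
  intro h
  exact (Finset.mem_sdiff.mp hb).2 (up_mem_mu_iff.mp h)

lemma upskew_suppS {a : Fin r → ℕ} (ha : a ∈ (F' \ mu x).image (up S hS)) :
    SuppS S a := by
  obtain ⟨b, _, rfl⟩ := Finset.mem_image.mp ha
  exact suppS_up b

lemma upskew_indicE_disjoint (hE : E ⊆ (Sᶜ).powersetCard 2) : Disjoint ((F' \ mu x).image (up S hS)) (E.image indic) := by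
  rw [Finset.disjoint_left]
  intro a ha ha'
  exact indicE_not_suppS hE ha' (upskew_suppS ha)

lemma recon_skew (hE : E ⊆ (Sᶜ).powersetCard 2) :
    recon S hS E F' \ mu r = (F' \ mu x).image (up S hS) ∪ E.image indic := by
  have hdisj : Disjoint (mu r) ((F' \ mu x).image (up S hS) ∪ E.image indic) := by
    rw [Finset.disjoint_right]
    intro a ha
    rcases Finset.mem_union.mp ha with h | h
    · exact upskew_not_mem_mu h
    · exact indicE_not_mem_mu hE h
  rw [recon, Finset.union_sdiff_cancel_left hdisj]

lemma card_recon (hE : E ⊆ (Sᶜ).powersetCard 2) (hmu' : mu x ⊆ F') :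
    (recon S hS E F').card = (r + 1) + ((F'.card - (x + 1)) + E.card) := by
  have hdisj : Disjoint (mu r) ((F' \ mu x).image (up S hS) ∪ E.image indic) := by
    rw [Finset.disjoint_right]
    intro a ha
    rcases Finset.mem_union.mp ha with h | h
    · exact upskew_not_mem_mu h
    · exact indicE_not_mem_mu hE h
  rw [recon, Finset.card_union_of_disjoint hdisj, Finset.card_union_of_disjoint
      (upskew_indicE_disjoint hE), card_mu]
  congr 1
  congr 1
  · rw [Finset.card_image_of_injective _ up_injective, Finset.card_sdiff_of_subset hmu', card_mu]
  · refine Finset.card_image_of_injOn ?_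
    intro t ht t' ht' h
    rw [← fsupp_indic t, ← fsupp_indic t', h]

lemma ferrers_recon (hE : E ⊆ (Sᶜ).powersetCard 2) (hFer' : IsFerrers F') (hmu' : mu x ⊆ F') :
    IsFerrers (recon S hS E F') := by
  constructor
  · exact ⟨0, mu_subset_recon zero_mem_mu⟩
  · intro a ha y hy
    rcases Finset.mem_union.mp ha with hmua | ha'
    · rcases mem_mu.mp hmua with rfl | ⟨i, rfl⟩
      · rw [le_zero_eq' hy]
        exact mu_subset_recon zero_mem_mu
      · rcases le_single_cases hy with rfl | rfl
        · exact mu_subset_recon zero_mem_mu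
        · exact ha
    rcases Finset.mem_union.mp ha' with hup | hind
    · obtain ⟨b, hb, rfl⟩ := Finset.mem_image.mp hup
      have hys : SuppS S y := suppS_of_le hy (suppS_up b)
      have hdy : ∀ k, down S hS y k ≤ b k := by
        intro k
        have := hy ((S.orderIsoOfFin hS k : Fin r))
        rwa [up_apply_iso] at this
      have hdyF : down S hS y ∈ F' := hFer'.2 b (Finset.mem_sdiff.mp hb).1 _ hdy
      have hyup : y = up S hS (down S hS y) := (up_down hys).symm
      by_cases hdmu : down S hS y ∈ mu x
      · rw [hyup]
        refine mu_subset_recon (up_mem_mu_iff.mpr hdmu)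
      · rw [hyup]
        refine Finset.mem_union_right _ (Finset.mem_union_left _ ?_)
        exact Finset.mem_image_of_mem _ (Finset.mem_sdiff.mpr ⟨hdyF, hdmu⟩)
    · obtain ⟨t, ht, rfl⟩ := Finset.mem_image.mp hind
      obtain ⟨hy_eq, hsub⟩ := le_indic_eq hy
      have hc2 := (edge_prop hE ht).2
      have hcle : (fsupp y).card ≤ 2 := hc2 ▸ Finset.card_le_card hsub
      rcases Nat.lt_or_ge (fsupp y).card 2 with hlt | hge
      · rcases Nat.lt_or_ge (fsupp y).card 1 with hlt1 | hge1
        · have h0 : fsupp y = ∅ := Finset.card_eq_zero.mp (by omega)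
          rw [hy_eq, h0, indic_empty]
          exact mu_subset_recon zero_mem_mu
        · obtain ⟨i, hi⟩ := Finset.card_eq_one.mp (by omega : (fsupp y).card = 1)
          rw [hy_eq, hi, indic_singleton]
          exact mu_subset_recon (single_mem_mu i)
      · have : fsupp y = t := Finset.eq_of_subset_of_card_le hsub (by omega)
        rw [hy_eq, this]
        exact Finset.mem_union_right _ (Finset.mem_union_right _
          (Finset.mem_image_of_mem _ ht))

end WithHyp

end Backward
section Backward2

variable {S : Finset (Fin r)} {hS : S.card = x} {E : Finset (Finset (Fin r))}
  {F' : Finset (Fin x → ℕ)}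

lemma H_recon (hE : E ⊆ (Sᶜ).powersetCard 2) :
    ∀ a ∈ recon S hS E F' \ mu r, ∀ i, a i ≠ 0 → i ∈ S →
      (a ∈ (F' \ mu x).image (up S hS) ∧ ∀ j, a j ≠ 0 → j ∈ S) := by
  intro a ha i hi hiS
  rw [recon_skew hE] at ha
  rcases Finset.mem_union.mp ha with h | h
  · exact ⟨h, upskew_suppS h⟩
  · exact absurd hiS (by
      obtain ⟨t, ht, rfl⟩ := Finset.mem_image.mp h
      have hit : i ∈ t := by
        by_contra hit
        exact hi (by simp [indic, hit])
      exact Finset.mem_compl.mp ((edge_prop hE ht).1 hit))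

lemma core_recon (hE : E ⊆ (Sᶜ).powersetCard 2)
    (hcond : ∀ B : Set (Fin x), IsBlock (F' \ mu x) B →
      ∃ a ∈ F' \ mu x, SuppIn a B ∧ ¬ IsType1 a) :
    coreSet (recon S hS E F' \ mu r) = S := by
  ext i
  rw [mem_coreSet]
  constructor
  · rintro ⟨a, ha, ht, j, hj, hEq⟩
    have hjS : j ∈ S := by
      rw [recon_skew hE] at ha
      rcases Finset.mem_union.mp ha with h | h
      · exact upskew_suppS h j hj
      · exact absurd (indicE_type1 hE h) ht
    rcases eqvgen_restrict (H_recon hE) hEq with rfl | ⟨hiff, _⟩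
    · exact hjS
    · exact hiff.mpr hjS
  · intro hi
    set k := (S.orderIsoOfFin hS).symm ⟨i, hi⟩ with hk
    obtain ⟨a, haσ', hsupp, ht⟩ := hcond {l | Relation.EqvGen (Touches (F' \ mu x)) k l} ⟨k, rfl⟩
    obtain ⟨j0, hj0⟩ := exists_ne_zero_of_not_mem_mu (Finset.mem_sdiff.mp haσ').2
    have hEq' : Relation.EqvGen (Touches (F' \ mu x)) k j0 := hsupp j0 hj0
    have hik : ((S.orderIsoOfFin hS k : Fin r)) = i := by
      rw [hk]
      exact congrArg Subtype.val (OrderIso.apply_symm_apply (S.orderIsoOfFin hS) ⟨i, hi⟩)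
    refine ⟨up S hS a, ?_, ?_, (S.orderIsoOfFin hS j0 : Fin r), ?_, ?_⟩
    · rw [recon_skew hE]
      exact Finset.mem_union_left _ (Finset.mem_image_of_mem _ haσ')
    · intro h
      exact ht (isType1_up.mp h)
    · rw [up_apply_iso]
      exact hj0
    · have h1 : Relation.EqvGen (Touches ((F' \ mu x).image (up S hS)))
          ((S.orderIsoOfFin hS k : Fin r)) ((S.orderIsoOfFin hS j0 : Fin r)) :=
        eqvgen_image_up.mpr hEq'
      rw [hik] at h1
      refine eqvgen_mono ?_ h1
      rw [recon_skew hE]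
      exact Finset.subset_union_left

lemma skew_filter_recon (hE : E ⊆ (Sᶜ).powersetCard 2) :
    (recon S hS E F' \ mu r).filter (SuppS S) = (F' \ mu x).image (up S hS) := by
  ext a
  rw [Finset.mem_filter, recon_skew hE]
  constructor
  · rintro ⟨ha, hsupp⟩
    rcases Finset.mem_union.mp ha with h | h
    · exact h
    · exact absurd hsupp (indicE_not_suppS hE h)
  · intro h
    exact ⟨Finset.mem_union_left _ h, upskew_suppS h⟩

lemma edges_recon (hE : E ⊆ (Sᶜ).powersetCard 2) :
    (((recon S hS E F' \ mu r) \ (recon S hS E F' \ mu r).filter (SuppS S)).image fsupp) = E := by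
  have h1 : (recon S hS E F' \ mu r) \ (recon S hS E F' \ mu r).filter (SuppS S) =
      E.image indic := by
    rw [skew_filter_recon hE, recon_skew hE,
      Finset.union_sdiff_cancel_left (upskew_indicE_disjoint hE)]
  rw [h1, Finset.image_image]
  have : ∀ t ∈ E, (fsupp ∘ indic) t = id t := fun t _ => fsupp_indic t
  rw [Finset.image_congr this, Finset.image_id]

lemma down_recon (hE : E ⊆ (Sᶜ).powersetCard 2) (hmu' : mu x ⊆ F') :
    ((recon S hS E F').filter (SuppS S)).image (down S hS) = F' := by
  ext b
  simp only [Finset.mem_image, Finset.mem_filter]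
  constructor
  · rintro ⟨a, ⟨haRec, haS⟩, rfl⟩
    rcases Finset.mem_union.mp haRec with hmua | ha'
    · exact hmu' ((down_mem_mu_iff haS).mpr hmua)
    · rcases Finset.mem_union.mp ha' with h | h
      · obtain ⟨b', hb', rfl⟩ := Finset.mem_image.mp h
        rw [down_up]
        exact (Finset.mem_sdiff.mp hb').1
      · exact absurd haS (indicE_not_suppS hE h)
  · intro hb
    refine ⟨up S hS b, ⟨?_, suppS_up b⟩, down_up b⟩
    by_cases hbmu : b ∈ mu x
    · exact mu_subset_recon (up_mem_mu_iff.mpr hbmu)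
    · exact Finset.mem_union_right _ (Finset.mem_union_left _
        (Finset.mem_image_of_mem _ (Finset.mem_sdiff.mpr ⟨hb, hbmu⟩)))

end Backward2
section RoundTrip

variable {S : Finset (Fin r)} {hS : S.card = x} {F : Finset (Fin r → ℕ)}

lemma recon_forward (hmu : mu r ⊆ F) (hcore : S = coreSet (F \ mu r)) :
    recon S hS (((F \ mu r) \ (F \ mu r).filter (SuppS S)).image fsupp)
      ((F.filter (SuppS S)).image (down S hS)) = F := by
  rw [recon]
  have h1 : (((F.filter (SuppS S)).image (down S hS)) \ mu x).image (up S hS) =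
      (F \ mu r).filter (SuppS S) := by
    rw [skew_down hmu]
    exact image_up_image_down _ (fun a ha => (Finset.mem_filter.mp ha).2)
  rw [h1, indic_image_edges hcore]
  rw [Finset.union_sdiff_of_subset (Finset.filter_subset _ _), Finset.union_sdiff_of_subset hmu]

end RoundTrip
section Main

variable (m r : ℕ)

def SrcT : Type := {F : Finset (Fin r → ℕ) // IsFerrers F ∧ mu r ⊆ F ∧ F.card = m + r + 1}

def FType (n x : ℕ) : Type := {F : Finset (Fin x → ℕ) //
  IsFerrers F ∧ mu x ⊆ F ∧ F.card = n ∧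
    ∀ B : Set (Fin x), IsBlock (F \ mu x) B → ∃ a ∈ F \ mu x, SuppIn a B ∧ ¬ IsType1 a}

def TgtT : Type := Σ x : Fin (r+1), Σ p : Fin (m+1),
  Σ S : {S : Finset (Fin r) // S.card = (x : ℕ)},
    {E : Finset (Finset (Fin r)) // E ⊆ ((S : Finset (Fin r))ᶜ).powersetCard 2 ∧
        E.card = m - (p : ℕ)} ×
      FType ((p : ℕ) + (x : ℕ) + 1) (x : ℕ)

variable {m r}

def Psi : TgtT m r → SrcT m r :=
  fun ⟨x, p, ⟨S, hSc⟩, ⟨⟨E, hEs, hEc⟩, ⟨F', hf1, hf2, hf3, hf4⟩⟩⟩ =>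
    ⟨recon S hSc E F', ferrers_recon hEs hf1 hf2, mu_subset_recon, by
      rw [card_recon hEs hf2, hf3, hEc]
      have hp : (p : ℕ) < m + 1 := p.isLt
      omega⟩

lemma Psi_injective : Function.Injective (Psi (m := m) (r := r)) := by
  rintro ⟨x1, p1, ⟨S1, hS1⟩, ⟨⟨E1, hE1, hEc1⟩, ⟨F1, h11, h12, h13, h14⟩⟩⟩
    ⟨x2, p2, ⟨S2, hS2⟩, ⟨⟨E2, hE2, hEc2⟩, ⟨F2, h21, h22, h23, h24⟩⟩⟩ h
  have hval : recon S1 hS1 E1 F1 = recon S2 hS2 E2 F2 := congrArg Subtype.val h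
  have hcr1 : coreSet (recon S1 hS1 E1 F1 \ mu r) = S1 := core_recon hE1 h14
  have hcr2 : coreSet (recon S2 hS2 E2 F2 \ mu r) = S2 := core_recon hE2 h24
  have hS12 : S1 = S2 := by
    rw [← hcr1, ← hcr2, hval]
  have hx12 : x1 = x2 := Fin.ext (by rw [← hS1, ← hS2, hS12])
  subst hx12
  subst hS12
  have hpf : hS2 = hS1 := rfl
  subst hpf
  have hd1 : ((recon S1 hS2 E1 F1).filter (SuppS S1)).image (down S1 hS2) = F1 :=
    down_recon hE1 h12
  have hd2 : ((recon S1 hS2 E2 F2).filter (SuppS S1)).image (down S1 hS2) = F2 :=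
    down_recon hE2 h22
  have hF12 : F1 = F2 := by
    rw [← hd1, ← hd2, hval]
  subst hF12
  have hp12 : p1 = p2 := by
    refine Fin.ext ?_
    have := h13.symm.trans h23
    omega
  subst hp12
  have he1 : ((recon S1 hS2 E1 F1 \ mu r) \ (recon S1 hS2 E1 F1 \ mu r).filter (SuppS S1)).image fsupp = E1 :=
    edges_recon hE1
  have he2 : ((recon S1 hS2 E2 F1 \ mu r) \ (recon S1 hS2 E2 F1 \ mu r).filter (SuppS S1)).image fsupp = E2 :=
    edges_recon hE2
  have hE12 : E1 = E2 := by
    rw [← he1, ← he2, hval]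
  subst hE12
  rfl

lemma Psi_surjective : Function.Surjective (Psi (m := m) (r := r)) := by
  rintro ⟨F, hFer, hmu, hcard⟩
  set σF := F \ mu r with hσF
  set S := coreSet σF with hcoreS
  set σS := σF.filter (SuppS S) with hσS
  have hx : S.card ≤ r := le_trans (Finset.card_le_univ S) (by simp)
  have hm : σF.card = m := by
    rw [hσF, Finset.card_sdiff_of_subset hmu, hcard, card_mu]
    omega
  have hp : σS.card ≤ m := le_trans (Finset.card_filter_le _ _) (le_of_eq hm)
  have hEs : ((σF \ σS).image fsupp) ⊆ (Sᶜ).powersetCard 2 := by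
    intro t ht
    obtain ⟨a, ha, rfl⟩ := Finset.mem_image.mp ht
    exact (edge_mem hcoreS ha).1
  have hEc : ((σF \ σS).image fsupp).card = m - σS.card := by
    rw [card_edges hcoreS, Finset.card_sdiff_of_subset (Finset.filter_subset _ _), hm]
  refine ⟨⟨⟨S.card, by omega⟩, ⟨σS.card, by omega⟩, ⟨S, rfl⟩,
    ⟨⟨(σF \ σS).image fsupp, hEs, hEc⟩,
     ⟨(F.filter (SuppS S)).image (down S rfl),
      ferrers_down hFer hmu, mu_subset_down hmu, ?_, fmat_cond_forward rfl hmu hcoreS⟩⟩⟩, ?_⟩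
  · rw [card_forward rfl hmu]
  · apply Subtype.ext
    show recon S rfl ((σF \ σS).image fsupp) ((F.filter (SuppS S)).image (down S rfl)) = F
    exact recon_forward hmu hcoreS

end Main
section Counting

lemma nat_card_sigma {ι : Type*} [Fintype ι] (f : ι → Type*) [∀ i, Finite (f i)] :
    Nat.card (Σ i, f i) = ∑ i, Nat.card (f i) := by
  letI : ∀ i, Fintype (f i) := fun i => Fintype.ofFinite (f i)
  simp only [Nat.card_eq_fintype_card, Fintype.card_sigma]

instance finite_FType (n x : ℕ) : Finite (FType n x) := by
  have h : {F : Finset (Fin x → ℕ) | IsFerrers F ∧ mu x ⊆ F ∧ F.card = n ∧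
      ∀ B : Set (Fin x), IsBlock (F \ mu x) B →
        ∃ a ∈ F \ mu x, SuppIn a B ∧ ¬ IsType1 a}.Finite := by
    refine (finite_ferrers x n).subset ?_
    rintro F ⟨h1, _, h3, _⟩
    exact ⟨h1, h3⟩
  exact h.to_subtype

lemma card_FType (n x : ℕ) : Nat.card (FType n x) = Fmat n x := rfl

lemma card_EType {r : ℕ} (S : Finset (Fin r)) (k : ℕ) :
    Nat.card {E : Finset (Finset (Fin r)) // E ⊆ (Sᶜ).powersetCard 2 ∧ E.card = k} =
      Nat.choose (Nat.choose (r - S.card) 2) k := by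
  have hiff : ∀ E : Finset (Finset (Fin r)),
      (E ⊆ (Sᶜ).powersetCard 2 ∧ E.card = k) ↔ E ∈ ((Sᶜ).powersetCard 2).powersetCard k := by
    intro E
    rw [Finset.mem_powersetCard]
  rw [Nat.card_congr (Equiv.subtypeEquivRight hiff), Nat.card_eq_fintype_card,
    Fintype.card_coe, Finset.card_powersetCard, Finset.card_powersetCard,
    Finset.card_compl, Fintype.card_fin]

lemma card_SType (r x : ℕ) :
    Nat.card {S : Finset (Fin r) // S.card = x} = Nat.choose r x := by
  rw [Nat.card_eq_fintype_card, Fintype.card_finset_len, Fintype.card_fin]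

lemma card_TgtT (m r : ℕ) : Nat.card (TgtT m r) =
    ∑ x ∈ Finset.range (r + 1), ∑ p ∈ Finset.range (m + 1),
      Nat.choose r x * Nat.choose (Nat.choose (r - x) 2) (m - p) * Fmat (p + x + 1) x := by
  rw [show TgtT m r = (Σ x : Fin (r+1), Σ p : Fin (m+1),
    Σ S : {S : Finset (Fin r) // S.card = (x : ℕ)},
      {E : Finset (Finset (Fin r)) // E ⊆ ((S : Finset (Fin r))ᶜ).powersetCard 2 ∧
          E.card = m - (p : ℕ)} ×
        FType ((p : ℕ) + (x : ℕ) + 1) (x : ℕ)) from rfl]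
  rw [nat_card_sigma]
  rw [← Fin.sum_univ_eq_sum_range (fun x => ∑ p ∈ Finset.range (m + 1),
      Nat.choose r x * Nat.choose (Nat.choose (r - x) 2) (m - p) * Fmat (p + x + 1) x) (r+1)]
  refine Finset.sum_congr rfl ?_
  intro x _
  rw [nat_card_sigma]
  rw [← Fin.sum_univ_eq_sum_range (fun p =>
      Nat.choose r (x:ℕ) * Nat.choose (Nat.choose (r - (x:ℕ)) 2) (m - p) *
        Fmat (p + (x:ℕ) + 1) (x:ℕ)) (m+1)]
  refine Finset.sum_congr rfl ?_
  intro p _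
  rw [nat_card_sigma]
  have hterm : ∀ S : {S : Finset (Fin r) // S.card = (x : ℕ)},
      Nat.card ({E : Finset (Finset (Fin r)) // E ⊆ ((S : Finset (Fin r))ᶜ).powersetCard 2 ∧
          E.card = m - (p : ℕ)} × FType ((p : ℕ) + (x : ℕ) + 1) (x : ℕ)) =
        Nat.choose (Nat.choose (r - (x:ℕ)) 2) (m - (p:ℕ)) * Fmat ((p:ℕ) + (x:ℕ) + 1) (x:ℕ) := by
    intro S
    rw [Nat.card_prod, card_FType, card_EType, S.2]
  rw [Finset.sum_congr rfl (fun S _ => hterm S), Finset.sum_const, Finset.card_univ,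
    Fintype.card_finset_len, Fintype.card_fin, smul_eq_mul, mul_assoc]

lemma amat_eq (m r : ℕ) : Amat (m + r + 1) r = Nat.card (SrcT m r) := by
  rw [Amat, show SrcT m r =
    {F : Finset (Fin r → ℕ) // IsFerrers F ∧ mu r ⊆ F ∧ F.card = m + r + 1} from rfl]
  apply Nat.card_congr
  apply Equiv.subtypeEquivRight
  intro F
  constructor
  · rintro ⟨hFer, hstrict, hcard⟩
    refine ⟨hFer, ?_, hcard⟩
    intro a ha
    rcases mem_mu.mp ha with rfl | ⟨i, rfl⟩
    · obtain ⟨b, hb⟩ := hFer.1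
      exact hFer.2 b hb 0 (fun i => Nat.zero_le _)
    · obtain ⟨a, haF, hai⟩ := hstrict i
      refine hFer.2 a haF _ (fun j => ?_)
      rcases eq_or_ne j i with rfl | hj
      · rw [Pi.single_eq_same]; omega
      · rw [Pi.single_eq_of_ne hj]; exact Nat.zero_le _
  · rintro ⟨hFer, hmu, hcard⟩
    refine ⟨hFer, fun i => ⟨Pi.single i 1, hmu (single_mem_mu i), ?_⟩, hcard⟩
    rw [Pi.single_eq_same]; exact one_ne_zero

end Counting

end S12

/-- `a_{m+r+1,r} = Σ_{x=0}^{r} Σ_{p=0}^{m} C(r,x) · C(C(r−x,2), m−p) · f_{p+x+1,x}`. -/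
theorem statement12 (m r : ℕ) :
    Amat (m + r + 1) r =
      ∑ x ∈ Finset.range (r + 1), ∑ p ∈ Finset.range (m + 1),
        Nat.choose r x * Nat.choose (Nat.choose (r - x) 2) (m - p) * Fmat (p + x + 1) x := by
  rw [S12.amat_eq, ← Nat.card_congr (Equiv.ofBijective _
    ⟨S12.Psi_injective (m := m) (r := r), S12.Psi_surjective⟩), S12.card_TgtT]
end
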